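/- arXiv:1709.06966 — 3 statements merged into one kernel-verified Lean document; each statement's English description precedes it below -/
import Mathlib

section
/- Let θ₁ > 0, θ₂ ≥ 0 and β > 0 be such that β(θ₁ − θ₂ − 1) < 2 < β(3θ₁ − θ₂ − 1). Then there exists a constant C, depending only on θ₁, θ₂ and β, such that for all 0 < t₁ < t₂ one has ∫₀^{t₁} ( ∫_ℝ |G_{t₂−s}(x) − G_{t₁−s}(x)|^{θ₁} |x|^{θ₂} dx )^{β} ds ≤ C (t₂ − t₁)^{1 − β(θ₁ − θ₂ − 1)/2}. -/
open MeasureTheory Real Filter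

/-- The heat kernel on `ℝ`: `G t x = (4πt)^(-1/2) exp(-x²/(4t))`. -/
noncomputable def G (t x : ℝ) : ℝ :=
  (4 * Real.pi * t) ^ (-(1:ℝ)/2) * Real.exp (-x ^ 2 / (4 * t))

section HeatKernelAux

open Set

noncomputable def Jm (θ : ℝ) : ℝ := ∫ x : ℝ, Real.exp (-x ^ 2) * |x| ^ θ

lemma Jm_nonneg (θ : ℝ) : 0 ≤ Jm θ :=
  integral_nonneg fun x => mul_nonneg (exp_pos _).le (rpow_nonneg (abs_nonneg _) _)

lemma integrable_gauss_mom {c θ : ℝ} (hc : 0 < c) (hθ : 0 ≤ θ) :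
    Integrable (fun x : ℝ => Real.exp (-(c * x ^ 2)) * |x| ^ θ) := by
  have hIoi : IntegrableOn (fun x : ℝ => Real.exp (-(c * x ^ 2)) * |x| ^ θ) (Set.Ioi 0) := by
    refine (integrableOn_rpow_mul_exp_neg_mul_sq hc (s := θ) (by linarith)).congr_fun
      (fun x hx => ?_) measurableSet_Ioi
    rw [abs_of_pos hx]; beta_reduce; rw [neg_mul]; ring
  rw [← integrableOn_univ, ← Set.Iio_union_Ici (a := (0:ℝ)), integrableOn_union,
    integrableOn_Ici_iff_integrableOn_Ioi]
  refine ⟨?_, hIoi⟩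
  rw [← (Measure.measurePreserving_neg (volume : Measure ℝ)).integrableOn_comp_preimage
      (Homeomorph.neg ℝ).measurableEmbedding]
  simpa [Function.comp_def] using hIoi

lemma integral_gauss_mom {c θ : ℝ} (hc : 0 < c) (hθ : 0 ≤ θ) :
    ∫ x : ℝ, Real.exp (-(c * x ^ 2)) * |x| ^ θ = c ^ (-(θ + 1) / 2) * Jm θ := by
  set r := c ^ ((1:ℝ)/2) with hrdef
  have hr : 0 < r := rpow_pos_of_pos hc _
  have hsq : r ^ (2:ℕ) = c := by
    rw [hrdef, ← rpow_natCast (c ^ ((1:ℝ)/2)) 2, ← rpow_mul hc.le]; norm_num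
  have key := MeasureTheory.Measure.integral_comp_mul_left
    (fun y : ℝ => Real.exp (-y ^ 2) * |y| ^ θ) r
  have h1 : ∀ x : ℝ, Real.exp (-(r * x) ^ 2) * |r * x| ^ θ
      = r ^ θ * (Real.exp (-(c * x ^ 2)) * |x| ^ θ) := by
    intro x
    rw [abs_mul, abs_of_pos hr, mul_rpow hr.le (abs_nonneg x)]
    have h2 : (r * x) ^ 2 = c * x ^ 2 := by rw [mul_pow, hsq]
    rw [h2]; ring
  simp only [h1] at key
  rw [integral_const_mul, smul_eq_mul, abs_of_pos (inv_pos.mpr hr)] at key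
  have hrθ : r ^ θ ≠ 0 := (rpow_pos_of_pos hr θ).ne'
  have hJ : (∫ y : ℝ, Real.exp (-y ^ 2) * |y| ^ θ) = Jm θ := rfl
  rw [hJ] at key
  have : ∫ x : ℝ, Real.exp (-(c * x ^ 2)) * |x| ^ θ = r⁻¹ * Jm θ / r ^ θ := by
    rw [eq_div_iff hrθ]
    linear_combination key
  rw [this]
  rw [show r⁻¹ = r ^ (-1 : ℝ) by rw [rpow_neg_one]]
  rw [div_eq_mul_inv, ← rpow_neg hr.le θ]
  rw [mul_comm (r ^ (-1:ℝ)) (Jm θ), mul_assoc, ← rpow_add hr, hrdef, ← rpow_mul hc.le]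
  rw [mul_comm]
  congr 1
  ring

lemma integrable_gauss_dom {c1 c2 θ : ℝ} (hc2 : 0 < c2) (hθ : 0 ≤ θ) :
    Integrable (fun x : ℝ => c1 * Real.exp (-(c2 * x ^ 2)) * |x| ^ θ) := by
  simpa [mul_assoc] using (integrable_gauss_mom hc2 hθ).const_mul c1

lemma integral_gauss_dom {c1 c2 θ : ℝ} (hc2 : 0 < c2) (hθ : 0 ≤ θ) :
    ∫ x : ℝ, c1 * Real.exp (-(c2 * x ^ 2)) * |x| ^ θ
      = c1 * c2 ^ (-(θ + 1) / 2) * Jm θ := by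
  simp only [mul_assoc]
  rw [integral_const_mul, integral_gauss_mom hc2 hθ]

lemma add_rpow_le {u v p : ℝ} (hu : 0 ≤ u) (hv : 0 ≤ v) (hp : 0 ≤ p) :
    (u + v) ^ p ≤ 2 ^ p * (u ^ p + v ^ p) := by
  have h1 : u + v ≤ 2 * max u v := by
    rcases le_total u v with h | h
    · rw [max_eq_right h]; linarith
    · rw [max_eq_left h]; linarith
  calc (u + v) ^ p ≤ (2 * max u v) ^ p :=
        rpow_le_rpow (by positivity) h1 hp
    _ = 2 ^ p * (max u v) ^ p := mul_rpow (by norm_num) (le_max_of_le_left hu)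
    _ ≤ 2 ^ p * (u ^ p + v ^ p) := by
        have : (max u v) ^ p ≤ u ^ p + v ^ p := by
          rcases le_total u v with h | h
          · rw [max_eq_right h]; nlinarith [rpow_nonneg hu p]
          · rw [max_eq_left h]; nlinarith [rpow_nonneg hv p]
        nlinarith [rpow_nonneg (show (0:ℝ) ≤ 2 by norm_num) p]

/-- `u * exp (-u) ≤ exp (-u/2)` for `u ≥ 0`. -/
lemma mul_exp_neg_le {u : ℝ} (hu : 0 ≤ u) : u * Real.exp (-u) ≤ Real.exp (-u / 2) := by
  have h1 : u ≤ Real.exp (u / 2) := by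
    have h2 := Real.add_one_le_exp (u / 4)
    have h3 : Real.exp (u / 4) * Real.exp (u / 4) = Real.exp (u / 2) := by
      rw [← Real.exp_add]; ring_nf
    nlinarith [Real.exp_pos (u / 4), sq_nonneg (1 - u / 4)]
  calc u * Real.exp (-u) ≤ Real.exp (u / 2) * Real.exp (-u) :=
        mul_le_mul_of_nonneg_right h1 (Real.exp_pos _).le
    _ = Real.exp (-u / 2) := by rw [← Real.exp_add]; ring_nf

lemma G_nonneg {t : ℝ} (ht : 0 ≤ t) (x : ℝ) : 0 ≤ G t x :=
  mul_nonneg (rpow_nonneg (by positivity) _) (Real.exp_pos _).le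

/-- `(G t x) ^ θ₁ = ((4πt)^(-1/2))^θ₁ * exp (-(θ₁/(4t) * x²))` for `t > 0`. -/
lemma G_rpow {θ₁ : ℝ} {t : ℝ} (ht : 0 < t) (x : ℝ) :
    G t x ^ θ₁ = ((4 * Real.pi * t) ^ (-(1:ℝ)/2)) ^ θ₁
      * Real.exp (-(θ₁ / (4 * t) * x ^ 2)) := by
  rw [G, mul_rpow (rpow_nonneg (by positivity) _) (Real.exp_pos _).le]
  congr 1
  rw [← Real.exp_mul]
  congr 1
  field_simp

noncomputable def K₁ (θ₁ θ₂ : ℝ) : ℝ :=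
  (2:ℝ) ^ θ₁ * (4 * Real.pi) ^ (-θ₁/2) * (θ₁/4) ^ (-(θ₂+1)/2) * Jm θ₂

lemma K₁_nonneg {θ₁ : ℝ} (θ₂ : ℝ) (hθ₁ : 0 < θ₁) : 0 ≤ K₁ θ₁ θ₂ :=
  mul_nonneg (mul_nonneg (mul_nonneg (rpow_nonneg (by norm_num) _)
    (rpow_nonneg (by positivity) _)) (rpow_nonneg (by positivity) _)) (Jm_nonneg θ₂)

lemma single_gauss_int {θ₁ θ₂ : ℝ} (hθ₁ : 0 < θ₁) (hθ₂ : 0 ≤ θ₂) {t : ℝ} (ht : 0 < t) :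
    ∫ x : ℝ, (2:ℝ) ^ θ₁ * ((4 * Real.pi * t) ^ (-(1:ℝ)/2)) ^ θ₁
        * Real.exp (-(θ₁ / (4 * t) * x ^ 2)) * |x| ^ θ₂
      = K₁ θ₁ θ₂ * t ^ (-((θ₁ - θ₂ - 1)/2)) := by
  have hπ : (0:ℝ) < Real.pi := Real.pi_pos
  have e1 : ((4 * Real.pi * t) ^ (-(1:ℝ)/2)) ^ θ₁
      = (4 * Real.pi) ^ (-θ₁/2) * t ^ (-θ₁/2) := by
    rw [← rpow_mul (by positivity : (0:ℝ) ≤ 4 * Real.pi * t),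
      show (-(1:ℝ)/2*θ₁) = -θ₁/2 by ring,
      mul_rpow (by positivity : (0:ℝ) ≤ 4 * Real.pi) ht.le]
  have e2 : (θ₁/(4*t)) ^ (-(θ₂+1)/2) = (θ₁/4) ^ (-(θ₂+1)/2) * t ^ ((θ₂+1)/2) := by
    rw [show θ₁/(4*t) = (θ₁/4) * t⁻¹ by rw [div_mul_eq_div_div, div_eq_mul_inv],
      mul_rpow (by positivity) (inv_nonneg.mpr ht.le), inv_rpow ht.le, ← rpow_neg ht.le,
      show -(-(θ₂+1)/2) = (θ₂+1)/2 by ring]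
  have e3 : t ^ (-θ₁/2) * t ^ ((θ₂+1)/2) = t ^ (-((θ₁-θ₂-1)/2)) := by
    rw [← rpow_add ht]; congr 1; ring
  rw [integral_gauss_dom (by positivity) hθ₂, e1, e2, K₁]
  calc (2:ℝ) ^ θ₁ * ((4*Real.pi) ^ (-θ₁/2) * t ^ (-θ₁/2))
        * ((θ₁/4) ^ (-(θ₂+1)/2) * t ^ ((θ₂+1)/2)) * Jm θ₂
      = (2:ℝ) ^ θ₁ * (4*Real.pi) ^ (-θ₁/2) * (θ₁/4) ^ (-(θ₂+1)/2) * Jm θ₂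
        * (t ^ (-θ₁/2) * t ^ ((θ₂+1)/2)) := by ring
    _ = (2:ℝ) ^ θ₁ * (4*Real.pi) ^ (-θ₁/2) * (θ₁/4) ^ (-(θ₂+1)/2) * Jm θ₂
        * t ^ (-((θ₁-θ₂-1)/2)) := by rw [e3]

lemma inner_crude {θ₁ θ₂ : ℝ} (hθ₁ : 0 < θ₁) (hθ₂ : 0 ≤ θ₂) {a b : ℝ}
    (ha : 0 < a) (hab : a ≤ b) :
    ∫ x : ℝ, |G b x - G a x| ^ θ₁ * |x| ^ θ₂
      ≤ K₁ θ₁ θ₂ * (a ^ (-((θ₁ - θ₂ - 1)/2)) + b ^ (-((θ₁ - θ₂ - 1)/2))) := by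
  have hb : 0 < b := lt_of_lt_of_le ha hab
  set g : ℝ → ℝ → ℝ := fun t x =>
    (2:ℝ) ^ θ₁ * ((4 * Real.pi * t) ^ (-(1:ℝ)/2)) ^ θ₁
      * Real.exp (-(θ₁ / (4 * t) * x ^ 2)) * |x| ^ θ₂ with hg
  have hints : ∀ t : ℝ, 0 < t → Integrable (fun x => g t x) := fun t ht => by
    simpa only [hg] using integrable_gauss_dom
      (c1 := (2:ℝ) ^ θ₁ * ((4 * Real.pi * t) ^ (-(1:ℝ)/2)) ^ θ₁) (by positivity) hθ₂
  have hpt : ∀ x : ℝ, |G b x - G a x| ^ θ₁ * |x| ^ θ₂ ≤ g a x + g b x := by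
    intro x
    have hGa := G_nonneg ha.le x
    have hGb := G_nonneg hb.le x
    have habs : |G b x - G a x| ≤ G a x + G b x := abs_le.mpr ⟨by linarith, by linarith⟩
    have h2 : |G b x - G a x| ^ θ₁ ≤ 2 ^ θ₁ * (G a x ^ θ₁ + G b x ^ θ₁) :=
      le_trans (rpow_le_rpow (abs_nonneg _) habs hθ₁.le) (add_rpow_le hGa hGb hθ₁.le)
    have h3 := mul_le_mul_of_nonneg_right h2 (rpow_nonneg (abs_nonneg x) θ₂)
    refine h3.trans_eq ?_
    rw [G_rpow ha x, G_rpow hb x]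
    simp only [hg]
    ring
  have hnn : ∀ x : ℝ, 0 ≤ |G b x - G a x| ^ θ₁ * |x| ^ θ₂ := fun x =>
    mul_nonneg (rpow_nonneg (abs_nonneg _) _) (rpow_nonneg (abs_nonneg _) _)
  have hmono := integral_mono_of_nonneg (Eventually.of_forall hnn)
    ((hints a ha).add (hints b hb)) (Eventually.of_forall hpt)
  simp only [Pi.add_apply] at hmono
  refine hmono.trans ?_
  rw [integral_add (hints a ha) (hints b hb)]
  simp only [hg]
  rw [single_gauss_int hθ₁ hθ₂ ha, single_gauss_int hθ₁ hθ₂ hb]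
  rw [mul_add]

lemma G_hasDerivAt (x : ℝ) {ρ : ℝ} (hρ0 : 0 < ρ) :
    HasDerivAt (fun y : ℝ => G y x)
      (4*Real.pi * (-(1:ℝ)/2) * (4*Real.pi*ρ) ^ (-(1:ℝ)/2 - 1) * Real.exp (-x^2/(4*ρ))
        + (4*Real.pi*ρ) ^ (-(1:ℝ)/2)
          * (Real.exp (-x^2/(4*ρ)) * (-x^2/4 * -(ρ^2)⁻¹))) ρ := by
  have hQ : (0:ℝ) < 4*Real.pi*ρ := mul_pos (by positivity) hρ0
  have h1 : HasDerivAt (fun y : ℝ => 4*Real.pi*y) (4*Real.pi) ρ := by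
    simpa using (hasDerivAt_id ρ).const_mul (4*Real.pi)
  have h2 := h1.rpow_const (p := -(1:ℝ)/2) (Or.inl hQ.ne')
  have h3 : HasDerivAt (fun y : ℝ => -x^2/(4*y)) (-x^2/4 * -(ρ^2)⁻¹) ρ := by
    have h3' := (hasDerivAt_inv hρ0.ne').const_mul (-x^2/4)
    have hfg : (fun y : ℝ => -x^2/4 * y⁻¹) = fun y : ℝ => -x^2/(4*y) := by
      funext y; ring
    rwa [hfg] at h3'
  have h5 := h2.mul h3.exp
  exact h5

lemma G_diff_bound {a b : ℝ} (x : ℝ) (ha : 0 < a) (hab : a ≤ b) :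
    |G b x - G a x| ≤ (3/2) * (4*Real.pi) ^ (-(1:ℝ)/2) * a ^ (-(3:ℝ)/2)
      * Real.exp (-(x^2/(8*b))) * (b - a) := by
  have hb : 0 < b := lt_of_lt_of_le ha hab
  set P := (4*Real.pi) ^ (-(1:ℝ)/2) with hP'
  set A := a ^ (-(3:ℝ)/2) with hA'
  set Ex := Real.exp (-(x^2/(8*b))) with hEx'
  have hP : (0:ℝ) < P := rpow_pos_of_pos (by positivity) _
  have hA0 : (0:ℝ) < A := rpow_pos_of_pos ha _
  have hEx : (0:ℝ) < Ex := Real.exp_pos _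
  set D : ℝ → ℝ := fun ρ =>
    4*Real.pi * (-(1:ℝ)/2) * (4*Real.pi*ρ) ^ (-(1:ℝ)/2 - 1) * Real.exp (-x^2/(4*ρ))
      + (4*Real.pi*ρ) ^ (-(1:ℝ)/2)
        * (Real.exp (-x^2/(4*ρ)) * (-x^2/4 * -(ρ^2)⁻¹)) with hD
  have hderiv : ∀ ρ ∈ Icc a b, HasDerivWithinAt (fun y : ℝ => G y x) (D ρ) (Icc a b) ρ :=
    fun ρ hρ => (G_hasDerivAt x (lt_of_lt_of_le ha hρ.1)).hasDerivWithinAt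
  have hbound : ∀ ρ ∈ Icc a b, ‖D ρ‖ ≤ (3/2) * P * A * Ex := by
    intro ρ hρ
    obtain ⟨hρa, hρb⟩ := hρ
    have hρ0 : 0 < ρ := lt_of_lt_of_le ha hρa
    have hQ : (0:ℝ) < 4*Real.pi*ρ := mul_pos (by positivity) hρ0
    set u := x^2/(4*ρ) with hu
    have hu0 : 0 ≤ u := by positivity
    have hR : ρ ^ (-(3:ℝ)/2) ≤ A := rpow_le_rpow_of_nonpos ha hρa (by norm_num)
    have hR0 : (0:ℝ) < ρ ^ (-(3:ℝ)/2) := rpow_pos_of_pos hρ0 _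
    have hexp1 : Real.exp (-u) ≤ Ex := by
      rw [hEx', Real.exp_le_exp, hu, neg_le_neg_iff]
      gcongr
      all_goals first | norm_num | linarith
    have hexp2 : Real.exp (-u/2) ≤ Ex := by
      rw [hEx', Real.exp_le_exp, hu]
      have h8 : x^2/(8*b) ≤ x^2/(8*ρ) := by
        gcongr
        all_goals first | norm_num | linarith
      have heq : -(x^2/(4*ρ))/2 = -(x^2/(8*ρ)) := by ring
      rw [heq]
      linarith
    have hEeq : Real.exp (-x^2/(4*ρ)) = Real.exp (-u) := by
      rw [hu]; congr 1; ring
    have hsplit : D ρ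
        = -(2*Real.pi * (4*Real.pi*ρ) ^ (-(1:ℝ)/2 - 1) * Real.exp (-u))
          + (4*Real.pi*ρ) ^ (-(1:ℝ)/2) * Real.exp (-u) * (u/ρ) := by
      rw [hD]
      simp only
      rw [hEeq, hu]
      ring
    have hrw32 : (4*Real.pi*ρ) ^ (-(1:ℝ)/2 - 1)
        = (4*Real.pi) ^ (-(3:ℝ)/2) * ρ ^ (-(3:ℝ)/2) := by
      rw [show (-(1:ℝ)/2 - 1 : ℝ) = -(3:ℝ)/2 by norm_num,
        mul_rpow (by positivity) hρ0.le]
    have hrw12 : (4*Real.pi*ρ) ^ (-(1:ℝ)/2)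
        = P * ρ ^ (-(1:ℝ)/2) := by
      rw [hP', mul_rpow (by positivity) hρ0.le]
    have hconst : 2*Real.pi*(4*Real.pi) ^ (-(3:ℝ)/2) = (1/2) * P := by
      rw [hP', show (-(3:ℝ)/2) = (-(1:ℝ)/2) + (-1:ℝ) by norm_num,
        rpow_add (by positivity : (0:ℝ) < 4*Real.pi), rpow_neg_one]
      field_simp
      ring
    have hhalf : ρ ^ (-(1:ℝ)/2) * ρ⁻¹ = ρ ^ (-(3:ℝ)/2) := by
      rw [← rpow_neg_one ρ, ← rpow_add hρ0]; norm_num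
    have ht1 : 2*Real.pi * (4*Real.pi*ρ) ^ (-(1:ℝ)/2 - 1) * Real.exp (-u)
        ≤ (1/2) * P * A * Ex := by
      rw [hrw32]
      calc 2*Real.pi * ((4*Real.pi) ^ (-(3:ℝ)/2) * ρ ^ (-(3:ℝ)/2)) * Real.exp (-u)
          = (1/2) * P * (ρ ^ (-(3:ℝ)/2) * Real.exp (-u)) := by
            linear_combination (ρ ^ (-(3:ℝ)/2) * Real.exp (-u)) * hconst
        _ ≤ (1/2) * P * (A * Ex) := by
            apply mul_le_mul_of_nonneg_left _ (by positivity)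
            exact mul_le_mul hR hexp1 (Real.exp_pos _).le hA0.le
        _ = (1/2) * P * A * Ex := by ring
    have ht2 : (4*Real.pi*ρ) ^ (-(1:ℝ)/2) * Real.exp (-u) * (u/ρ) ≤ P * A * Ex := by
      rw [hrw12]
      calc P * ρ ^ (-(1:ℝ)/2) * Real.exp (-u) * (u/ρ)
          = P * ((ρ ^ (-(1:ℝ)/2) * ρ⁻¹) * (u * Real.exp (-u))) := by ring
        _ = P * (ρ ^ (-(3:ℝ)/2) * (u * Real.exp (-u))) := by rw [hhalf]
        _ ≤ P * (A * Ex) := by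
            apply mul_le_mul_of_nonneg_left _ hP.le
            exact mul_le_mul hR (le_trans (mul_exp_neg_le hu0) hexp2)
              (mul_nonneg hu0 (Real.exp_pos _).le) hA0.le
        _ = P * A * Ex := by ring
    rw [Real.norm_eq_abs, hsplit]
    have h1nn : 0 ≤ 2*Real.pi * (4*Real.pi*ρ) ^ (-(1:ℝ)/2 - 1) * Real.exp (-u) :=
      mul_nonneg (mul_nonneg (by positivity) (rpow_nonneg hQ.le _)) (Real.exp_pos _).le
    have h2nn : 0 ≤ (4*Real.pi*ρ) ^ (-(1:ℝ)/2) * Real.exp (-u) * (u/ρ) :=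
      mul_nonneg (mul_nonneg (rpow_nonneg hQ.le _) (Real.exp_pos _).le)
        (div_nonneg hu0 hρ0.le)
    calc |-(2*Real.pi * (4*Real.pi*ρ) ^ (-(1:ℝ)/2 - 1) * Real.exp (-u))
            + (4*Real.pi*ρ) ^ (-(1:ℝ)/2) * Real.exp (-u) * (u/ρ)|
        ≤ |-(2*Real.pi * (4*Real.pi*ρ) ^ (-(1:ℝ)/2 - 1) * Real.exp (-u))|
          + |(4*Real.pi*ρ) ^ (-(1:ℝ)/2) * Real.exp (-u) * (u/ρ)| := abs_add_le _ _
      _ = 2*Real.pi * (4*Real.pi*ρ) ^ (-(1:ℝ)/2 - 1) * Real.exp (-u)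
          + (4*Real.pi*ρ) ^ (-(1:ℝ)/2) * Real.exp (-u) * (u/ρ) := by
            rw [abs_neg, abs_of_nonneg h1nn, abs_of_nonneg h2nn]
      _ ≤ (1/2) * P * A * Ex + P * A * Ex := add_le_add ht1 ht2
      _ = (3/2) * P * A * Ex := by ring
  have key := Convex.norm_image_sub_le_of_norm_hasDerivWithin_le hderiv hbound
    (convex_Icc a b) (⟨le_refl a, hab⟩ : a ∈ Icc a b) (⟨hab, le_refl b⟩ : b ∈ Icc a b)
  rw [Real.norm_eq_abs, Real.norm_eq_abs, abs_of_nonneg (by linarith : (0:ℝ) ≤ b - a)] at key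
  simpa using key

noncomputable def K₂ (θ₁ θ₂ : ℝ) : ℝ :=
  ((3/2) * (4*Real.pi) ^ (-(1:ℝ)/2)) ^ θ₁ * (θ₁/8) ^ (-(θ₂+1)/2)
    * 2 ^ ((θ₂+1)/2) * Jm θ₂

lemma K₂_nonneg {θ₁ : ℝ} (θ₂ : ℝ) (hθ₁ : 0 < θ₁) : 0 ≤ K₂ θ₁ θ₂ :=
  mul_nonneg (mul_nonneg (mul_nonneg (rpow_nonneg (by positivity) _)
    (rpow_nonneg (by positivity) _)) (rpow_nonneg (by norm_num) _)) (Jm_nonneg θ₂)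

lemma inner_far {θ₁ θ₂ : ℝ} (hθ₁ : 0 < θ₁) (hθ₂ : 0 ≤ θ₂) {a b : ℝ}
    (ha : 0 < a) (hab : a ≤ b) (hb2 : b ≤ 2*a) :
    ∫ x : ℝ, |G b x - G a x| ^ θ₁ * |x| ^ θ₂
      ≤ K₂ θ₁ θ₂ * (b - a) ^ θ₁ * a ^ (-((3*θ₁ - θ₂ - 1)/2)) := by
  have hb : 0 < b := lt_of_lt_of_le ha hab
  have hba : (0:ℝ) ≤ b - a := by linarith
  set P := (4*Real.pi) ^ (-(1:ℝ)/2) with hPdef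
  have hP : (0:ℝ) < P := rpow_pos_of_pos (by positivity) _
  set c2 := θ₁/(8*b) with hc2def
  have hc2 : 0 < c2 := by rw [hc2def]; positivity
  set c1 := ((3/2) * P * a ^ (-(3:ℝ)/2) * (b-a)) ^ θ₁ with hc1def
  have hApos : (0:ℝ) < a ^ (-(3:ℝ)/2) := rpow_pos_of_pos ha _
  have hpt : ∀ x : ℝ, |G b x - G a x| ^ θ₁ * |x| ^ θ₂
      ≤ c1 * Real.exp (-(c2 * x ^ 2)) * |x| ^ θ₂ := by
    intro x
    apply mul_le_mul_of_nonneg_right _ (rpow_nonneg (abs_nonneg x) θ₂)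
    have h1 := rpow_le_rpow (abs_nonneg _) (G_diff_bound x ha hab) hθ₁.le
    refine h1.trans_eq ?_
    rw [show (3/2)*P*a ^ (-(3:ℝ)/2)*Real.exp (-(x^2/(8*b)))*(b-a)
        = ((3/2)*P*a ^ (-(3:ℝ)/2)*(b-a)) * Real.exp (-(x^2/(8*b))) from by ring]
    rw [mul_rpow (by positivity) (Real.exp_pos _).le, hc1def]
    congr 1
    rw [← Real.exp_mul]
    congr 1
    rw [hc2def]
    field_simp
  have hnn : ∀ x : ℝ, 0 ≤ |G b x - G a x| ^ θ₁ * |x| ^ θ₂ := fun x =>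
    mul_nonneg (rpow_nonneg (abs_nonneg _) _) (rpow_nonneg (abs_nonneg _) _)
  have hmono := integral_mono_of_nonneg (Eventually.of_forall hnn)
    (integrable_gauss_dom (c1 := c1) hc2 hθ₂) (Eventually.of_forall hpt)
  refine hmono.trans ?_
  rw [integral_gauss_dom hc2 hθ₂]
  have e0 : c1 = ((3/2)*P) ^ θ₁ * a ^ (-(3:ℝ)/2*θ₁) * (b-a) ^ θ₁ := by
    rw [hc1def, mul_rpow (mul_nonneg (by positivity) hApos.le) hba,
      mul_rpow (by positivity) hApos.le, ← rpow_mul ha.le]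
  have e1 : c2 ^ (-(θ₂+1)/2) = (θ₁/8) ^ (-(θ₂+1)/2) * b ^ ((θ₂+1)/2) := by
    rw [hc2def, show θ₁/(8*b) = (θ₁/8) * b⁻¹ by rw [div_mul_eq_div_div, div_eq_mul_inv],
      mul_rpow (by positivity) (inv_nonneg.mpr hb.le), inv_rpow hb.le, ← rpow_neg hb.le,
      show -(-(θ₂+1)/2) = (θ₂+1)/2 by ring]
  have e2 : b ^ ((θ₂+1)/2) ≤ 2 ^ ((θ₂+1)/2) * a ^ ((θ₂+1)/2) := by
    rw [← mul_rpow (by norm_num) ha.le]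
    exact rpow_le_rpow hb.le hb2 (by positivity)
  have e3 : a ^ (-(3:ℝ)/2*θ₁) * a ^ ((θ₂+1)/2) = a ^ (-((3*θ₁-θ₂-1)/2)) := by
    rw [← rpow_add ha]; congr 1; ring
  have hM1 : (0:ℝ) ≤ ((3/2)*P) ^ θ₁ * (θ₁/8) ^ (-(θ₂+1)/2) * Jm θ₂ * (b-a) ^ θ₁ :=
    mul_nonneg (mul_nonneg (mul_nonneg (rpow_nonneg (by positivity) _)
      (rpow_nonneg (by positivity) _)) (Jm_nonneg θ₂)) (rpow_nonneg hba _)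
  calc c1 * c2 ^ (-(θ₂+1)/2) * Jm θ₂
      = (((3/2)*P) ^ θ₁ * (θ₁/8) ^ (-(θ₂+1)/2) * Jm θ₂ * (b-a) ^ θ₁)
        * (a ^ (-(3:ℝ)/2*θ₁) * b ^ ((θ₂+1)/2)) := by rw [e0, e1]; ring
    _ ≤ (((3/2)*P) ^ θ₁ * (θ₁/8) ^ (-(θ₂+1)/2) * Jm θ₂ * (b-a) ^ θ₁)
        * (a ^ (-(3:ℝ)/2*θ₁) * (2 ^ ((θ₂+1)/2) * a ^ ((θ₂+1)/2))) := by
        apply mul_le_mul_of_nonneg_left _ hM1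
        apply mul_le_mul_of_nonneg_left e2 (rpow_nonneg ha.le _)
    _ = (((3/2)*P) ^ θ₁ * (θ₁/8) ^ (-(θ₂+1)/2) * 2 ^ ((θ₂+1)/2) * Jm θ₂)
        * (b-a) ^ θ₁ * (a ^ (-(3:ℝ)/2*θ₁) * a ^ ((θ₂+1)/2)) := by ring
    _ = K₂ θ₁ θ₂ * (b - a) ^ θ₁ * a ^ (-((3*θ₁-θ₂-1)/2)) := by rw [e3, K₂, hPdef]

lemma near_sum {κ a b d : ℝ} (ha : 0 < a) (hab : a ≤ b) (hbd : b ≤ d) :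
    a ^ (-κ) + b ^ (-κ) ≤ 2 * (a ^ (-κ) + d ^ (-κ)) := by
  have hb : 0 < b := lt_of_lt_of_le ha hab
  have hd : 0 < d := lt_of_lt_of_le hb hbd
  rcases le_or_gt 0 κ with hκ | hκ
  · have h1 : b ^ (-κ) ≤ a ^ (-κ) := rpow_le_rpow_of_nonpos ha hab (neg_nonpos.mpr hκ)
    have h2 : 0 ≤ d ^ (-κ) := rpow_nonneg hd.le _
    linarith
  · have h1 : a ^ (-κ) ≤ d ^ (-κ) := rpow_le_rpow ha.le (le_trans hab hbd) (by linarith)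
    have h2 : b ^ (-κ) ≤ d ^ (-κ) := rpow_le_rpow hb.le hbd (by linarith)
    have h3 : 0 ≤ a ^ (-κ) := rpow_nonneg ha.le _
    linarith

set_option maxHeartbeats 1000000 in
theorem heat_kernel_time_increment_estimate
    (θ₁ θ₂ β : ℝ) (hθ₁ : 0 < θ₁) (hθ₂ : 0 ≤ θ₂) (hβ : 0 < β)
    (h1 : β * (θ₁ - θ₂ - 1) < 2) (h2 : 2 < β * (3 * θ₁ - θ₂ - 1)) :
    ∃ C : ℝ, 0 < C ∧ ∀ t₁ t₂ : ℝ, 0 < t₁ → t₁ < t₂ →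
      ∫ s in (0:ℝ)..t₁,
          (∫ x : ℝ, |G (t₂ - s) x - G (t₁ - s) x| ^ θ₁ * |x| ^ θ₂) ^ β
        ≤ C * (t₂ - t₁) ^ (1 - β * (θ₁ - θ₂ - 1) / 2) := by
  set κ := (θ₁ - θ₂ - 1)/2 with hκdef
  set σ := (3*θ₁ - θ₂ - 1)/2 with hσdef
  have hβκ : β * κ < 1 := by rw [hκdef]; nlinarith
  have hβσ : 1 < β * σ := by rw [hσdef]; nlinarith
  have hγpos : 0 < 1 - β * κ := by linarith
  set A₁ := K₁ θ₁ θ₂ ^ β * 4 ^ β * (1 + 2 ^ (-(β*κ))) with hA₁def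
  set A₂ := K₂ θ₁ θ₂ ^ β with hA₂def
  have h2βκ : (0:ℝ) ≤ 2 ^ (-(β*κ)) := rpow_nonneg (by norm_num) _
  have hA₁ : 0 ≤ A₁ := by
    apply mul_nonneg (mul_nonneg (rpow_nonneg (K₁_nonneg θ₂ hθ₁) _)
      (rpow_nonneg (by norm_num) _))
    linarith
  have hA₂ : 0 ≤ A₂ := rpow_nonneg (K₂_nonneg θ₂ hθ₁) _
  set C := A₂ / (β*σ - 1) + A₁ * (1/(1 - β*κ) + 1) + 1 with hCdef
  have hC0 : 0 ≤ A₂ / (β*σ - 1) + A₁ * (1/(1-β*κ) + 1) := by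
    apply add_nonneg (div_nonneg hA₂ (by linarith))
    apply mul_nonneg hA₁
    have h3 : 0 < 1/(1-β*κ) := by positivity
    linarith
  refine ⟨C, by rw [hCdef]; linarith, ?_⟩
  intro t₁ t₂ ht₁ ht
  set δ := t₂ - t₁ with hδdef
  have hδ : 0 < δ := by rw [hδdef]; linarith
  set f : ℝ → ℝ := fun s =>
    (∫ x : ℝ, |G (t₂ - s) x - G (t₁ - s) x| ^ θ₁ * |x| ^ θ₂) ^ β with hfdef
  set F₂ : ℝ → ℝ := fun s => A₂ * δ ^ (θ₁*β) * (t₁ - s) ^ (-(β*σ)) with hF₂def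
  set F₁ : ℝ → ℝ := fun s => A₁ * ((t₁ - s) ^ (-(β*κ)) + δ ^ (-(β*κ))) with hF₁def
  set h : ℝ → ℝ := fun s =>
    (Ioc 0 (t₁-δ)).indicator F₂ s + (Ioc (t₁-δ) t₁).indicator F₁ s with hhdef
  -- integrability of the pieces
  have hiF₂ : IntegrableOn F₂ (Ioc 0 (t₁-δ)) := by
    rcases le_or_gt t₁ δ with hcase | hcase
    · rw [Set.Ioc_eq_empty (by linarith : ¬ (0:ℝ) < t₁ - δ)]
      exact integrableOn_empty
    · have hcont : ContinuousOn F₂ (Icc 0 (t₁-δ)) := by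
        apply continuousOn_const.mul
        apply ContinuousOn.rpow_const (continuousOn_const.sub continuousOn_id)
        intro s hs
        left
        simp only [id_eq, mem_Icc, Pi.sub_apply] at hs ⊢
        have h7 : δ ≤ t₁ - s := by linarith [hs.2]
        exact ne_of_gt (by linarith)
      exact hcont.integrableOn_Icc.mono_set Ioc_subset_Icc_self
  have hiF₁ : IntegrableOn F₁ (Ioc (t₁-δ) t₁) := by
    have h1' : IntervalIntegrable (fun u : ℝ => u ^ (-(β*κ))) volume 0 δ :=
      intervalIntegral.intervalIntegrable_rpow' (by linarith)
    have h2' := h1'.comp_sub_left t₁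
    rw [sub_zero] at h2'
    -- h2' : IntervalIntegrable (fun s => (t₁ - s) ^ (-(β*κ))) volume t₁ (t₁ - δ)
    have h3' : IntegrableOn (fun s : ℝ => (t₁ - s) ^ (-(β*κ))) (Ioc (t₁-δ) t₁) := h2'.2
    have h4' : IntegrableOn (fun _ : ℝ => δ ^ (-(β*κ))) (Ioc (t₁-δ) t₁) :=
      integrableOn_const measure_Ioc_lt_top.ne
    have := (h3'.add h4').const_mul A₁
    exact this
  have hind₂ : Integrable ((Ioc 0 (t₁-δ)).indicator F₂) (volume.restrict (Ioc 0 t₁)) :=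
    ((integrable_indicator_iff measurableSet_Ioc).mpr hiF₂).restrict
  have hind₁ : Integrable ((Ioc (t₁-δ) t₁).indicator F₁) (volume.restrict (Ioc 0 t₁)) :=
    ((integrable_indicator_iff measurableSet_Ioc).mpr hiF₁).restrict
  have hih : Integrable h (volume.restrict (Ioc 0 t₁)) := hind₂.add hind₁
  -- nonnegativity
  have hF₂nn : ∀ s ∈ Ioc (0:ℝ) (t₁-δ), 0 ≤ F₂ s := by
    intro s hs
    have : (0:ℝ) ≤ t₁ - s := by have := hs.2; linarith [hδ]
    exact mul_nonneg (mul_nonneg hA₂ (rpow_nonneg hδ.le _)) (rpow_nonneg this _)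
  have hF₁nn : ∀ s ∈ Ioc (t₁-δ) t₁, 0 ≤ F₁ s := by
    intro s hs
    have h5 : (0:ℝ) ≤ t₁ - s := by have := hs.2; linarith
    exact mul_nonneg hA₁ (add_nonneg (rpow_nonneg h5 _) (rpow_nonneg hδ.le _))
  have hfnn : ∀ s : ℝ, 0 ≤ f s := fun s => rpow_nonneg (integral_nonneg fun x =>
    mul_nonneg (rpow_nonneg (abs_nonneg _) _) (rpow_nonneg (abs_nonneg _) _)) _
  -- the a.e. bound
  have hne : ∀ᵐ s ∂(volume.restrict (Ioc (0:ℝ) t₁)), s ≠ t₁ := by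
    apply ae_restrict_of_ae
    rw [ae_iff]
    have hset : {s : ℝ | ¬ s ≠ t₁} = {t₁} := by ext s; simp
    rw [hset]
    exact measure_singleton t₁
  have hae : ∀ᵐ s ∂(volume.restrict (Ioc (0:ℝ) t₁)), f s ≤ h s := by
    filter_upwards [ae_restrict_mem measurableSet_Ioc, hne] with s hs hsne
    obtain ⟨hs0, hst⟩ := hs
    have hst' : s < t₁ := lt_of_le_of_ne hst hsne
    have ha : 0 < t₁ - s := by linarith
    have hab : t₁ - s ≤ t₂ - s := by rw [hδdef] at hδ; linarith
    have hI0 : 0 ≤ ∫ x : ℝ, |G (t₂ - s) x - G (t₁ - s) x| ^ θ₁ * |x| ^ θ₂ :=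
      integral_nonneg fun x =>
        mul_nonneg (rpow_nonneg (abs_nonneg _) _) (rpow_nonneg (abs_nonneg _) _)
    have hK₁ := K₁_nonneg θ₂ hθ₁ (θ₁ := θ₁)
    have hK₂ := K₂_nonneg θ₂ hθ₁ (θ₁ := θ₁)
    have hδt : t₂ - s = (t₁ - s) + δ := by rw [hδdef]; ring
    rcases le_or_gt s (t₁ - δ) with hfar | hnear
    · -- far regime
      have hmem : s ∈ Ioc (0:ℝ) (t₁-δ) := ⟨hs0, hfar⟩
      have hb2 : t₂ - s ≤ 2*(t₁ - s) := by rw [hδt]; linarith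
      have hint := inner_far hθ₁ hθ₂ ha hab hb2
      rw [← hσdef, show t₂ - s - (t₁ - s) = δ from by rw [hδdef]; ring] at hint
      have hstep : f s ≤ F₂ s := by
        rw [hfdef, hF₂def]
        simp only
        have hch := rpow_le_rpow hI0 hint hβ.le
        refine hch.trans_eq ?_
        rw [mul_rpow (mul_nonneg hK₂ (rpow_nonneg hδ.le _)) (rpow_nonneg ha.le _),
          mul_rpow hK₂ (rpow_nonneg hδ.le _),
          ← rpow_mul hδ.le, ← rpow_mul ha.le, hA₂def,
          show -σ*β = -(β*σ) from by ring]
      refine hstep.trans ?_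
      rw [hhdef]
      simp only
      rw [Set.indicator_of_mem hmem]
      have h6 : 0 ≤ (Ioc (t₁-δ) t₁).indicator F₁ s := Set.indicator_nonneg hF₁nn s
      linarith
    · -- near regime
      have hmem : s ∈ Ioc (t₁-δ) t₁ := ⟨hnear, hst⟩
      have hb2δ : t₂ - s ≤ 2*δ := by rw [hδt]; linarith
      have hint := inner_crude hθ₁ hθ₂ ha hab
      rw [← hκdef] at hint
      have hsum := near_sum (κ := κ) ha hab hb2δ
      have hint2 : (∫ x : ℝ, |G (t₂ - s) x - G (t₁ - s) x| ^ θ₁ * |x| ^ θ₂)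
          ≤ K₁ θ₁ θ₂ * 2 * ((t₁ - s) ^ (-κ) + (2*δ) ^ (-κ)) := by
        calc (∫ x : ℝ, |G (t₂ - s) x - G (t₁ - s) x| ^ θ₁ * |x| ^ θ₂)
            ≤ K₁ θ₁ θ₂ * ((t₁-s) ^ (-κ) + (t₂-s) ^ (-κ)) := hint
          _ ≤ K₁ θ₁ θ₂ * (2 * ((t₁-s) ^ (-κ) + (2*δ) ^ (-κ))) :=
              mul_le_mul_of_nonneg_left hsum hK₁
          _ = K₁ θ₁ θ₂ * 2 * ((t₁ - s) ^ (-κ) + (2*δ) ^ (-κ)) := by ring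
      have hstep : f s ≤ F₁ s := by
        rw [hfdef, hF₁def]
        simp only
        have hch := rpow_le_rpow hI0 hint2 hβ.le
        have hxnn : (0:ℝ) ≤ (t₁ - s) ^ (-κ) := rpow_nonneg ha.le _
        have hynn : (0:ℝ) ≤ (2*δ) ^ (-κ) := rpow_nonneg (by linarith) _
        refine hch.trans ?_
        rw [mul_rpow (mul_nonneg hK₁ (by norm_num)) (add_nonneg hxnn hynn),
          mul_rpow hK₁ (by norm_num : (0:ℝ) ≤ 2)]
        have hadd := add_rpow_le hxnn hynn hβ.le
        have hKnn : (0:ℝ) ≤ K₁ θ₁ θ₂ ^ β * 2 ^ β :=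
          mul_nonneg (rpow_nonneg hK₁ _) (rpow_nonneg (by norm_num) _)
        calc K₁ θ₁ θ₂ ^ β * 2 ^ β * ((t₁-s) ^ (-κ) + (2*δ) ^ (-κ)) ^ β
            ≤ K₁ θ₁ θ₂ ^ β * 2 ^ β * (2 ^ β * (((t₁-s) ^ (-κ)) ^ β + ((2*δ) ^ (-κ)) ^ β)) :=
              mul_le_mul_of_nonneg_left hadd hKnn
          _ = K₁ θ₁ θ₂ ^ β * (2 ^ β * 2 ^ β)
              * ((t₁-s) ^ (-(β*κ)) + (2 ^ (-(β*κ)) * δ ^ (-(β*κ)))) := by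
              rw [← rpow_mul ha.le, ← rpow_mul (by linarith : (0:ℝ) ≤ 2*δ),
                show -κ*β = -(β*κ) from by ring,
                mul_rpow (by norm_num : (0:ℝ) ≤ 2) hδ.le]
              ring
          _ ≤ A₁ * ((t₁ - s) ^ (-(β*κ)) + δ ^ (-(β*κ))) := by
              rw [hA₁def, show (2:ℝ) ^ β * 2 ^ β = 4 ^ β from by
                rw [← mul_rpow (by norm_num) (by norm_num)]; norm_num]
              have hxnn2 : (0:ℝ) ≤ (t₁ - s) ^ (-(β*κ)) := rpow_nonneg ha.le _
              have hynn2 : (0:ℝ) ≤ δ ^ (-(β*κ)) := rpow_nonneg hδ.le _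
              have hKnn4 : (0:ℝ) ≤ K₁ θ₁ θ₂ ^ β * 4 ^ β :=
                mul_nonneg (rpow_nonneg hK₁ _) (rpow_nonneg (by norm_num) _)
              nlinarith [mul_nonneg hKnn4 hxnn2, mul_nonneg hKnn4 hynn2,
                mul_nonneg (mul_nonneg hKnn4 h2βκ) hxnn2,
                mul_nonneg (mul_nonneg hKnn4 h2βκ) hynn2]
      refine hstep.trans ?_
      rw [hhdef]
      simp only
      rw [Set.indicator_of_mem hmem]
      have h6 : 0 ≤ (Ioc 0 (t₁-δ)).indicator F₂ s := Set.indicator_nonneg hF₂nn s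
      linarith
  have hle := integral_mono_of_nonneg (Eventually.of_forall hfnn) hih hae
  -- split the dominating integral
  have hsplit : ∫ s in Ioc (0:ℝ) t₁, h s
      = (∫ s in Ioc (0:ℝ) (t₁-δ), F₂ s) + ∫ s in Ioc (max (t₁-δ) 0) t₁, F₁ s := by
    rw [hhdef]
    rw [integral_add hind₂ hind₁]
    congr 1
    · rw [integral_indicator measurableSet_Ioc,
        Measure.restrict_restrict measurableSet_Ioc, Set.Ioc_inter_Ioc,
        min_eq_left (by linarith : t₁ - δ ≤ t₁), max_self]
    · rw [integral_indicator measurableSet_Ioc,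
        Measure.restrict_restrict measurableSet_Ioc, Set.Ioc_inter_Ioc,
        min_self]
  -- value of the far piece
  have hfarval : (∫ s in Ioc (0:ℝ) (t₁-δ), F₂ s) ≤ A₂ / (β*σ-1) * δ ^ (1 - β*κ) := by
    have hrhs : (0:ℝ) ≤ A₂ / (β*σ-1) * δ ^ (1 - β*κ) :=
      mul_nonneg (div_nonneg hA₂ (by linarith)) (rpow_nonneg hδ.le _)
    rcases le_or_gt t₁ δ with hcase | hcase
    · rw [Set.Ioc_eq_empty (by linarith : ¬ (0:ℝ) < t₁ - δ)]
      simpa using hrhs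
    · have h0δ : (0:ℝ) ≤ t₁ - δ := by linarith
      rw [← intervalIntegral.integral_of_le h0δ, hF₂def]
      simp only
      rw [intervalIntegral.integral_const_mul]
      have hcs := intervalIntegral.integral_comp_sub_left
        (a := (0:ℝ)) (b := t₁ - δ) (fun u : ℝ => u ^ (-(β*σ))) t₁
      rw [show t₁ - (t₁ - δ) = δ from by ring, sub_zero] at hcs
      rw [hcs, integral_rpow
        (Or.inr ⟨by intro hcon; linarith,
          Set.notMem_uIcc_of_lt hδ ht₁⟩)]
      have hval : (t₁ ^ (-(β*σ)+1) - δ ^ (-(β*σ)+1)) / (-(β*σ)+1)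
          ≤ δ ^ (-(β*σ)+1) / (β*σ-1) := by
        rw [show (-(β*σ)+1) = -(β*σ-1) from by ring, div_neg, ← neg_div, neg_sub]
        gcongr
        · exact sub_le_self _ (rpow_nonneg ht₁.le _)
      calc A₂ * δ ^ (θ₁*β) * ((t₁ ^ (-(β*σ)+1) - δ ^ (-(β*σ)+1)) / (-(β*σ)+1))
          ≤ A₂ * δ ^ (θ₁*β) * (δ ^ (-(β*σ)+1) / (β*σ-1)) := by
            apply mul_le_mul_of_nonneg_left hval
            exact mul_nonneg hA₂ (rpow_nonneg hδ.le _)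
        _ = A₂ / (β*σ-1) * (δ ^ (θ₁*β) * δ ^ (-(β*σ)+1)) := by ring
        _ = A₂ / (β*σ-1) * δ ^ (1 - β*κ) := by
            rw [← rpow_add hδ]
            congr 1
            rw [hκdef, hσdef]
            ring
  -- value of the near piece
  have hnearval : (∫ s in Ioc (max (t₁-δ) 0) t₁, F₁ s)
      ≤ A₁ * (1/(1-β*κ) + 1) * δ ^ (1 - β*κ) := by
    set m := max (t₁-δ) 0 with hmdef
    have hm0 : (0:ℝ) ≤ m := le_max_right _ _
    have hmt : m ≤ t₁ := max_le (by linarith) ht₁.le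
    have hdm : t₁ - m ≤ δ := by
      have h7 : t₁ - δ ≤ m := le_max_left _ _
      linarith
    have hdm0 : (0:ℝ) ≤ t₁ - m := by linarith
    rw [← intervalIntegral.integral_of_le hmt, hF₁def]
    simp only
    rw [intervalIntegral.integral_const_mul]
    have hii1 : IntervalIntegrable (fun s : ℝ => (t₁ - s) ^ (-(β*κ))) volume m t₁ := by
      have h1' : IntervalIntegrable (fun u : ℝ => u ^ (-(β*κ))) volume (t₁ - m) (t₁ - t₁) :=
        (intervalIntegral.intervalIntegrable_rpow' (by linarith)).symm
      simpa using h1'.comp_sub_left t₁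
    rw [intervalIntegral.integral_add hii1 intervalIntegrable_const]
    have hcs := intervalIntegral.integral_comp_sub_left
      (a := m) (b := t₁) (fun u : ℝ => u ^ (-(β*κ))) t₁
    rw [sub_self] at hcs
    rw [hcs, integral_rpow (Or.inl (by linarith : (-1:ℝ) < -(β*κ))),
      intervalIntegral.integral_const, zero_rpow (show -(β*κ)+1 ≠ 0 from ne_of_gt (by linarith)),
      smul_eq_mul]
    have hb1 : ((t₁ - m) ^ (-(β*κ)+1) - 0) / (-(β*κ)+1) ≤ δ ^ (1-β*κ) / (1-β*κ) := by
      rw [sub_zero, show (-(β*κ)+1) = 1-β*κ from by ring]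
      gcongr
      all_goals try exact rpow_le_rpow hdm0 hdm (by linarith)
    have hb2 : (t₁ - m) * δ ^ (-(β*κ)) ≤ δ ^ (1-β*κ) := by
      have h8 : (t₁ - m) * δ ^ (-(β*κ)) ≤ δ * δ ^ (-(β*κ)) :=
        mul_le_mul_of_nonneg_right hdm (rpow_nonneg hδ.le _)
      refine h8.trans_eq ?_
      rw [show δ * δ ^ (-(β*κ)) = δ ^ (1:ℝ) * δ ^ (-(β*κ)) from by rw [rpow_one],
        ← rpow_add hδ]
      congr 1 <;> ring_nf
    calc A₁ * (((t₁ - m) ^ (-(β*κ)+1) - 0) / (-(β*κ)+1) + (t₁ - m) * δ ^ (-(β*κ)))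
        ≤ A₁ * (δ ^ (1-β*κ) / (1-β*κ) + δ ^ (1-β*κ)) :=
          mul_le_mul_of_nonneg_left (add_le_add hb1 hb2) hA₁
      _ = A₁ * (1/(1-β*κ) + 1) * δ ^ (1 - β*κ) := by ring
  -- put everything together
  have hexp : 1 - β*κ = 1 - β * (θ₁ - θ₂ - 1) / 2 := by rw [hκdef]; ring
  calc ∫ s in (0:ℝ)..t₁, f s
      = ∫ s in Ioc (0:ℝ) t₁, f s := intervalIntegral.integral_of_le ht₁.le
    _ ≤ ∫ s in Ioc (0:ℝ) t₁, h s := hle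
    _ = (∫ s in Ioc (0:ℝ) (t₁-δ), F₂ s) + ∫ s in Ioc (max (t₁-δ) 0) t₁, F₁ s := hsplit
    _ ≤ A₂ / (β*σ-1) * δ ^ (1-β*κ) + A₁ * (1/(1-β*κ) + 1) * δ ^ (1-β*κ) :=
        add_le_add hfarval hnearval
    _ ≤ C * δ ^ (1-β*κ) := by
        rw [hCdef]
        have h9 : (0:ℝ) ≤ δ ^ (1-β*κ) := rpow_nonneg hδ.le _
        nlinarith
    _ = C * δ ^ (1 - β * (θ₁ - θ₂ - 1) / 2) := by rw [hexp]

end HeatKernelAux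
end

section
/- Let θ₁ > 0, θ₂ ≥ 0 and β > 0 be such that β(θ₁ − θ₂ − 1) < 2 < β(3θ₁ − θ₂ − 1). Then the integral ∫₀^{∞} σ^{−2 + β(θ₁ − θ₂ − 1)/2} ( ∫_ℝ | (σ+1)^{−1/2} exp(−y²/(4(σ+1))) − exp(−y²/4) |^{θ₁} |y|^{θ₂} dy )^{β} dσ is finite. -/
open MeasureTheory Real Filter

set_option maxHeartbeats 1000000

section Aux
open Set

lemma integrable_abs_rpow_mul_exp {b : ℝ} (hb : 0 < b) {s : ℝ} (hs : -1 < s) :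
    Integrable fun x : ℝ => |x| ^ s * Real.exp (-b * x ^ 2) := by
  rw [← integrableOn_univ, ← Set.Iio_union_Ici (a := (0:ℝ)), integrableOn_union,
    integrableOn_Ici_iff_integrableOn_Ioi]
  have h0 : IntegrableOn (fun x : ℝ => |x| ^ s * Real.exp (-b * x ^ 2)) (Set.Ioi 0) := by
    apply (integrableOn_rpow_mul_exp_neg_mul_sq hb hs).congr_fun ?_ measurableSet_Ioi
    intro x hx
    simp only []
    rw [abs_of_pos hx]
  refine ⟨?_, h0⟩
  rw [← (Measure.measurePreserving_neg (volume : Measure ℝ)).integrableOn_comp_preimage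
      (Homeomorph.neg ℝ).measurableEmbedding]
  simp only [Function.comp_def, neg_sq, neg_preimage, neg_Iio, neg_neg, neg_zero, abs_neg]
  exact h0

lemma integrable_exp_quad {b s : ℝ} (hb : 0 < b) (hs : -1 < s) :
    Integrable fun x : ℝ => Real.exp (-(b * x ^ 2)) * |x| ^ s := by
  have := integrable_abs_rpow_mul_exp hb hs
  simpa [mul_comm, neg_mul] using this

lemma scale_integral (c : ℝ) {b : ℝ} (hb : 0 < b) (s : ℝ) :
    (∫ y : ℝ, Real.exp (-(c * y ^ 2) / b) * |y| ^ s)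
      = b ^ ((s + 1) / 2) * ∫ u : ℝ, Real.exp (-(c * u ^ 2)) * |u| ^ s := by
  set a : ℝ := b ^ (-(1:ℝ)/2) with ha_def
  have hapos : 0 < a := Real.rpow_pos_of_pos hb _
  have hsq : a ^ 2 = b⁻¹ := by
    rw [ha_def, ← Real.rpow_natCast (b ^ (-(1:ℝ)/2)) 2, ← Real.rpow_mul hb.le]
    norm_num
    exact Real.rpow_neg_one b
  have ha_s : a ^ s = b ^ (-(s/2)) := by
    rw [ha_def, ← Real.rpow_mul hb.le]
    ring_nf
  have key : ∀ y : ℝ, Real.exp (-(c * y ^ 2) / b) * |y| ^ s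
      = b ^ (s/2) * (Real.exp (-(c * (a * y) ^ 2)) * |a * y| ^ s) := by
    intro y
    have h1 : (a * y) ^ 2 = y ^ 2 * b⁻¹ := by rw [mul_pow, hsq]; ring
    have h2 : |a * y| ^ s = a ^ s * |y| ^ s := by
      rw [abs_mul, Real.mul_rpow (abs_nonneg _) (abs_nonneg _), abs_of_pos hapos]
    rw [h1, h2, ha_s]
    have h3 : b ^ (s/2) * b ^ (-(s/2)) = 1 := by
      rw [← Real.rpow_add hb]; norm_num
    have : -(c * (y ^ 2 * b⁻¹)) = -(c * y ^ 2) / b := by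
      field_simp
    rw [this]
    rw [show b ^ (s/2) * (Real.exp (-(c * y ^ 2) / b) * (b ^ (-(s/2)) * |y| ^ s))
        = (b ^ (s/2) * b ^ (-(s/2))) * (Real.exp (-(c * y ^ 2) / b) * |y| ^ s) from by ring,
      h3, one_mul]
  rw [integral_congr_ae (Filter.Eventually.of_forall key)]
  rw [MeasureTheory.integral_const_mul]
  rw [show (fun y : ℝ => Real.exp (-(c * (a * y) ^ 2)) * |a * y| ^ s)
      = (fun u : ℝ => Real.exp (-(c * u ^ 2)) * |u| ^ s) ∘ (fun y => a * y) from rfl]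
  have hcomp := Measure.integral_comp_mul_left
    (fun u : ℝ => Real.exp (-(c * u ^ 2)) * |u| ^ s) a
  simp only [Function.comp_def]
  rw [hcomp]
  have hainv : |a⁻¹| = b ^ ((1:ℝ)/2) := by
    rw [abs_of_pos (inv_pos.2 hapos), ha_def, ← Real.rpow_neg_one,
      ← Real.rpow_mul hb.le]
    norm_num
  rw [hainv, smul_eq_mul, ← mul_assoc, ← Real.rpow_add hb]
  ring_nf

lemma rpow_add_le_two_rpow {a b θ : ℝ} (ha : 0 ≤ a) (hb : 0 ≤ b) (hθ : 0 ≤ θ) :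
    (a + b) ^ θ ≤ 2 ^ θ * (a ^ θ + b ^ θ) := by
  have h1 : a + b ≤ 2 * max a b := by
    rcases le_total a b with h | h
    · simp [max_eq_right h]; linarith
    · simp [max_eq_left h]; linarith
  calc (a + b) ^ θ ≤ (2 * max a b) ^ θ :=
        Real.rpow_le_rpow (by positivity) h1 hθ
    _ = 2 ^ θ * (max a b) ^ θ := Real.mul_rpow (by norm_num) (le_max_iff.2 (Or.inl ha))
    _ ≤ 2 ^ θ * (a ^ θ + b ^ θ) := by
        apply mul_le_mul_of_nonneg_left _ (by positivity)
        rcases max_cases a b with ⟨he, _⟩ | ⟨he, _⟩ <;> rw [he]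
        · nlinarith [Real.rpow_nonneg hb θ]
        · nlinarith [Real.rpow_nonneg ha θ]

lemma small_sigma_pointwise {σ : ℝ} (y : ℝ) (hσ : 0 < σ) (hσ1 : σ ≤ 1) :
    |(σ + 1) ^ (-(1:ℝ)/2) * Real.exp (-y ^ 2 / (4 * (σ + 1))) - Real.exp (-y ^ 2 / 4)|
      ≤ 4 * σ * Real.exp (-y ^ 2 / 16) := by
  set b : ℝ := σ + 1 with hb_def
  have hb1 : (1:ℝ) ≤ b := by simp [hb_def]; linarith
  have hb2 : b ≤ 2 := by simp [hb_def]; linarith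
  have hbpos : (0:ℝ) < b := by linarith
  set r : ℝ := b ^ (-(1:ℝ)/2) with hr_def
  have hr0 : 0 < r := Real.rpow_pos_of_pos hbpos _
  have hr1 : r ≤ 1 := Real.rpow_le_one_of_one_le_of_nonpos hb1 (by norm_num)
  set E₁ : ℝ := Real.exp (-y ^ 2 / (4 * b)) with hE1_def
  set E₂ : ℝ := Real.exp (-y ^ 2 / 4) with hE2_def
  have hE1pos : 0 < E₁ := Real.exp_pos _
  have hE2pos : 0 < E₂ := Real.exp_pos _
  have hE21 : E₂ ≤ E₁ := by
    apply Real.exp_le_exp.2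
    rw [div_le_div_iff₀ (by norm_num) (by linarith)]
    nlinarith [sq_nonneg y]
  -- step: 1 - r ≤ σ/2
  have hr2 : r ^ 2 * b = 1 := by
    rw [hr_def, ← Real.rpow_natCast (b ^ (-(1:ℝ)/2)) 2, ← Real.rpow_mul hbpos.le]
    norm_num
    rw [Real.rpow_neg_one]
    field_simp
  have hrhalf : 1 - σ / 2 ≤ r := by
    have hb' : b = σ + 1 := hb_def
    have hpoly : (1 - σ/2) ^ 2 * b ≤ 1 := by
      rw [hb']
      nlinarith [mul_nonneg (mul_nonneg hσ.le hσ.le) (by linarith : (0:ℝ) ≤ 3 - σ)]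
    have hsum : 0 < r + (1 - σ/2) := by linarith
    have hprod : 0 ≤ (r - (1 - σ/2)) * (r + (1 - σ/2)) := by nlinarith [hr2, hpoly, hbpos]
    nlinarith [hprod, hsum]
  -- step: E₁ - E₂ ≤ σ * (y^2/4) * E₁
  have hdiff : E₁ - E₂ ≤ σ * (y ^ 2 / 4) * E₁ := by
    have hu : (0:ℝ) ≤ y ^ 2 / 4 - y ^ 2 / (4 * b) := by
      rw [sub_nonneg, div_le_div_iff₀ (by linarith) (by norm_num)]
      nlinarith [sq_nonneg y]
    have hE2eq : E₂ = E₁ * Real.exp (-(y ^ 2 / 4 - y ^ 2 / (4 * b))) := by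
      rw [hE1_def, hE2_def, ← Real.exp_add]; ring_nf
    have hexp_ge : 1 - (y ^ 2 / 4 - y ^ 2 / (4 * b))
        ≤ Real.exp (-(y ^ 2 / 4 - y ^ 2 / (4 * b))) := by
      have := Real.add_one_le_exp (-(y ^ 2 / 4 - y ^ 2 / (4 * b)))
      linarith
    have hub : y ^ 2 / 4 - y ^ 2 / (4 * b) ≤ σ * (y ^ 2 / 4) := by
      rw [div_sub_div _ _ (by norm_num : (4:ℝ) ≠ 0) (by positivity : 4 * b ≠ 0)]
      rw [div_le_iff₀ (by positivity)]
      have : y ^ 2 * (4 * b) - 4 * y ^ 2 = 4 * y ^ 2 * σ := by rw [hb_def]; ring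
      rw [this]
      nlinarith [mul_nonneg (mul_nonneg hσ.le (sq_nonneg y)) (sub_nonneg.2 hb1)]
    calc E₁ - E₂ = E₁ * (1 - Real.exp (-(y ^ 2 / 4 - y ^ 2 / (4 * b)))) := by
          rw [hE2eq]; ring
      _ ≤ E₁ * (y ^ 2 / 4 - y ^ 2 / (4 * b)) := by
          apply mul_le_mul_of_nonneg_left _ hE1pos.le
          linarith
      _ ≤ σ * (y ^ 2 / 4) * E₁ := by
          rw [mul_comm]
          exact mul_le_mul_of_nonneg_right hub hE1pos.le
  have habs : |r * E₁ - E₂| ≤ (E₁ - E₂) + (1 - r) * E₂ := by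
    rw [abs_le]
    constructor <;> nlinarith [hE21, hr0, hr1, hE2pos, hE1pos]
  have hE18 : E₁ ≤ Real.exp (-y ^ 2 / 8) := by
    apply Real.exp_le_exp.2
    rw [div_le_div_iff₀ (by linarith) (by norm_num)]
    nlinarith [sq_nonneg y]
  have hE28 : E₂ ≤ Real.exp (-y ^ 2 / 8) := by
    apply Real.exp_le_exp.2
    rw [div_le_div_iff₀ (by norm_num) (by norm_num)]
    nlinarith [sq_nonneg y]
  have hkey : (y ^ 2 / 4 + 1 / 2) * Real.exp (-y ^ 2 / 8)
      ≤ 4 * Real.exp (-y ^ 2 / 16) := by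
    have h1 : y ^ 2 / 4 + 1 / 2 ≤ 4 * Real.exp (y ^ 2 / 16) := by
      have := Real.add_one_le_exp (y ^ 2 / 16)
      nlinarith [Real.exp_pos (y ^ 2 / 16)]
    calc (y ^ 2 / 4 + 1 / 2) * Real.exp (-y ^ 2 / 8)
        ≤ (4 * Real.exp (y ^ 2 / 16)) * Real.exp (-y ^ 2 / 8) :=
          mul_le_mul_of_nonneg_right h1 (Real.exp_pos _).le
      _ = 4 * Real.exp (-y ^ 2 / 16) := by
          rw [mul_assoc, ← Real.exp_add]; ring_nf
  calc |r * E₁ - E₂| ≤ (E₁ - E₂) + (1 - r) * E₂ := habs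
    _ ≤ σ * (y ^ 2 / 4) * E₁ + (σ / 2) * E₂ := by
        have : (1 - r) * E₂ ≤ (σ / 2) * E₂ :=
          mul_le_mul_of_nonneg_right (by linarith) hE2pos.le
        linarith
    _ ≤ σ * (y ^ 2 / 4) * Real.exp (-y ^ 2 / 8) + (σ / 2) * Real.exp (-y ^ 2 / 8) := by
        have h1 : σ * (y ^ 2 / 4) * E₁ ≤ σ * (y ^ 2 / 4) * Real.exp (-y ^ 2 / 8) :=
          mul_le_mul_of_nonneg_left hE18 (by positivity)
        have h2 : (σ / 2) * E₂ ≤ (σ / 2) * Real.exp (-y ^ 2 / 8) :=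
          mul_le_mul_of_nonneg_left hE28 (by positivity)
        linarith
    _ = σ * ((y ^ 2 / 4 + 1 / 2) * Real.exp (-y ^ 2 / 8)) := by ring
    _ ≤ σ * (4 * Real.exp (-y ^ 2 / 16)) :=
        mul_le_mul_of_nonneg_left hkey hσ.le
    _ = 4 * σ * Real.exp (-y ^ 2 / 16) := by ring

lemma exp_rpow_aux (x θ : ℝ) : Real.exp x ^ θ = Real.exp (θ * x) := by
  rw [← Real.exp_mul, mul_comm]

lemma I_small {θ₁ θ₂ : ℝ} (hθ₁ : 0 < θ₁) (hθ₂ : 0 ≤ θ₂) {σ : ℝ} (hσ : 0 < σ) (hσ1 : σ ≤ 1) :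
    (∫ y : ℝ, |(σ + 1) ^ (-(1:ℝ)/2) * Real.exp (-y ^ 2 / (4 * (σ + 1)))
        - Real.exp (-y ^ 2 / 4)| ^ θ₁ * |y| ^ θ₂)
      ≤ (4 * σ) ^ θ₁ * ∫ y : ℝ, Real.exp (-(θ₁/16 * y ^ 2)) * |y| ^ θ₂ := by
  have hint : Integrable fun y : ℝ => Real.exp (-(θ₁/16 * y ^ 2)) * |y| ^ θ₂ :=
    integrable_exp_quad (by positivity) (by linarith)
  rw [← MeasureTheory.integral_const_mul]
  apply integral_mono_of_nonneg
  · exact ae_of_all _ fun y => by positivity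
  · exact hint.const_mul _
  · apply ae_of_all _ fun y => ?_
    have h1 := small_sigma_pointwise (σ := σ) y hσ hσ1
    have h2 : |(σ + 1) ^ (-(1:ℝ)/2) * Real.exp (-y ^ 2 / (4 * (σ + 1)))
        - Real.exp (-y ^ 2 / 4)| ^ θ₁ ≤ (4 * σ * Real.exp (-y ^ 2 / 16)) ^ θ₁ :=
      Real.rpow_le_rpow (abs_nonneg _) h1 hθ₁.le
    have h3 : (4 * σ * Real.exp (-y ^ 2 / 16)) ^ θ₁
        = (4 * σ) ^ θ₁ * Real.exp (-(θ₁/16 * y ^ 2)) := by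
      rw [Real.mul_rpow (by positivity) (Real.exp_pos _).le, exp_rpow_aux]
      ring_nf
    calc |(σ + 1) ^ (-(1:ℝ)/2) * Real.exp (-y ^ 2 / (4 * (σ + 1)))
          - Real.exp (-y ^ 2 / 4)| ^ θ₁ * |y| ^ θ₂
        ≤ (4 * σ * Real.exp (-y ^ 2 / 16)) ^ θ₁ * |y| ^ θ₂ :=
          mul_le_mul_of_nonneg_right h2 (Real.rpow_nonneg (abs_nonneg _) _)
      _ = (4 * σ) ^ θ₁ * (Real.exp (-(θ₁/16 * y ^ 2)) * |y| ^ θ₂) := by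
          rw [h3]; ring

lemma I_large {θ₁ θ₂ : ℝ} (hθ₁ : 0 < θ₁) (hθ₂ : 0 ≤ θ₂) {σ : ℝ} (hσ : 0 < σ) :
    (∫ y : ℝ, |(σ + 1) ^ (-(1:ℝ)/2) * Real.exp (-y ^ 2 / (4 * (σ + 1)))
        - Real.exp (-y ^ 2 / 4)| ^ θ₁ * |y| ^ θ₂)
      ≤ 2 ^ θ₁ * (((σ + 1) ^ ((θ₂ + 1 - θ₁)/2) + 1)
          * ∫ u : ℝ, Real.exp (-(θ₁/4 * u ^ 2)) * |u| ^ θ₂) := by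
  set b : ℝ := σ + 1 with hb_def
  have hbpos : (0:ℝ) < b := by simp [hb_def]; linarith
  have hKint : Integrable fun u : ℝ => Real.exp (-(θ₁/4 * u ^ 2)) * |u| ^ θ₂ :=
    integrable_exp_quad (by positivity) (by linarith)
  have hKnonneg : 0 ≤ ∫ u : ℝ, Real.exp (-(θ₁/4 * u ^ 2)) * |u| ^ θ₂ :=
    integral_nonneg fun u => by positivity
  have hg1eq : (fun y : ℝ => Real.exp (-(θ₁/4 * y ^ 2) / b) * |y| ^ θ₂)
      = fun y : ℝ => Real.exp (-(θ₁/(4*b) * y ^ 2)) * |y| ^ θ₂ := by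
    funext y
    congr 2
    calc -(θ₁/4 * y ^ 2) / b = (-(θ₁ * y ^ 2)) / 4 / b := by ring
      _ = (-(θ₁ * y ^ 2)) / (4 * b) := by rw [div_div]
      _ = -(θ₁/(4*b) * y ^ 2) := by ring
  have hg1int : Integrable fun y : ℝ => Real.exp (-(θ₁/4 * y ^ 2) / b) * |y| ^ θ₂ := by
    rw [hg1eq]
    exact integrable_exp_quad (by positivity) (by linarith)
  have hg1val : (∫ y : ℝ, Real.exp (-(θ₁/4 * y ^ 2) / b) * |y| ^ θ₂)
      = b ^ ((θ₂ + 1)/2) * ∫ u : ℝ, Real.exp (-(θ₁/4 * u ^ 2)) * |u| ^ θ₂ :=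
    scale_integral (θ₁/4) hbpos θ₂
  -- pointwise bound
  have hpt : ∀ y : ℝ, |b ^ (-(1:ℝ)/2) * Real.exp (-y ^ 2 / (4 * b))
        - Real.exp (-y ^ 2 / 4)| ^ θ₁ * |y| ^ θ₂
      ≤ 2 ^ θ₁ * (b ^ (-(θ₁/2)) * (Real.exp (-(θ₁/4 * y ^ 2) / b) * |y| ^ θ₂)
          + Real.exp (-(θ₁/4 * y ^ 2)) * |y| ^ θ₂) := by
    intro y
    have hr : (0:ℝ) ≤ b ^ (-(1:ℝ)/2) := (Real.rpow_pos_of_pos hbpos _).le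
    have habs : |b ^ (-(1:ℝ)/2) * Real.exp (-y ^ 2 / (4 * b)) - Real.exp (-y ^ 2 / 4)|
        ≤ b ^ (-(1:ℝ)/2) * Real.exp (-y ^ 2 / (4 * b)) + Real.exp (-y ^ 2 / 4) := by
      refine (abs_sub _ _).trans ?_
      rw [abs_of_nonneg (by positivity), abs_of_nonneg (Real.exp_pos _).le]
    have h1 : |b ^ (-(1:ℝ)/2) * Real.exp (-y ^ 2 / (4 * b)) - Real.exp (-y ^ 2 / 4)| ^ θ₁
        ≤ 2 ^ θ₁ * ((b ^ (-(1:ℝ)/2) * Real.exp (-y ^ 2 / (4 * b))) ^ θ₁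
            + Real.exp (-y ^ 2 / 4) ^ θ₁) := by
      refine (Real.rpow_le_rpow (abs_nonneg _) habs hθ₁.le).trans ?_
      exact rpow_add_le_two_rpow (by positivity) (Real.exp_pos _).le hθ₁.le
    have h2 : (b ^ (-(1:ℝ)/2) * Real.exp (-y ^ 2 / (4 * b))) ^ θ₁
        = b ^ (-(θ₁/2)) * Real.exp (-(θ₁/4 * y ^ 2) / b) := by
      rw [Real.mul_rpow hr (Real.exp_pos _).le, exp_rpow_aux,
        ← Real.rpow_mul hbpos.le]
      congr 1
      · congr 1
        ring
      · congr 1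
        calc θ₁ * (-y ^ 2 / (4 * b)) = (-(θ₁ * y ^ 2)) / (4 * b) := by ring
          _ = (-(θ₁ * y ^ 2)) / 4 / b := by rw [div_div]
          _ = -(θ₁/4 * y ^ 2) / b := by ring
    have h3 : Real.exp (-y ^ 2 / 4) ^ θ₁ = Real.exp (-(θ₁/4 * y ^ 2)) := by
      rw [exp_rpow_aux]
      congr 1
      ring
    calc |b ^ (-(1:ℝ)/2) * Real.exp (-y ^ 2 / (4 * b)) - Real.exp (-y ^ 2 / 4)| ^ θ₁
          * |y| ^ θ₂
        ≤ (2 ^ θ₁ * ((b ^ (-(1:ℝ)/2) * Real.exp (-y ^ 2 / (4 * b))) ^ θ₁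
            + Real.exp (-y ^ 2 / 4) ^ θ₁)) * |y| ^ θ₂ :=
          mul_le_mul_of_nonneg_right h1 (Real.rpow_nonneg (abs_nonneg _) _)
      _ = 2 ^ θ₁ * (b ^ (-(θ₁/2)) * (Real.exp (-(θ₁/4 * y ^ 2) / b) * |y| ^ θ₂)
          + Real.exp (-(θ₁/4 * y ^ 2)) * |y| ^ θ₂) := by
          rw [h2, h3]; ring
  -- integrate
  have hRHSint : Integrable (fun y : ℝ =>
      2 ^ θ₁ * (b ^ (-(θ₁/2)) * (Real.exp (-(θ₁/4 * y ^ 2) / b) * |y| ^ θ₂)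
        + Real.exp (-(θ₁/4 * y ^ 2)) * |y| ^ θ₂)) :=
    (((hg1int.const_mul _).add hKint).const_mul _)
  have hmono := integral_mono_of_nonneg
    (ae_of_all _ fun y => by positivity) hRHSint (ae_of_all _ hpt)
  refine hmono.trans ?_
  rw [MeasureTheory.integral_const_mul, MeasureTheory.integral_add (hg1int.const_mul _) hKint,
    MeasureTheory.integral_const_mul, hg1val]
  rw [← mul_assoc, ← Real.rpow_add hbpos]
  have : -(θ₁/2) + (θ₂ + 1)/2 = (θ₂ + 1 - θ₁)/2 := by ring
  rw [this]
  apply le_of_eq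
  ring

end Aux

theorem scale_invariant_integral_finite
    (θ₁ θ₂ β : ℝ) (hθ₁ : 0 < θ₁) (hθ₂ : 0 ≤ θ₂) (hβ : 0 < β)
    (h1 : β * (θ₁ - θ₂ - 1) < 2) (h2 : 2 < β * (3 * θ₁ - θ₂ - 1)) :
    MeasureTheory.IntegrableOn
      (fun σ : ℝ => σ ^ (-2 + β * (θ₁ - θ₂ - 1) / 2) *
        (∫ y : ℝ,
          |(σ + 1) ^ (-(1:ℝ)/2) * Real.exp (-y ^ 2 / (4 * (σ + 1)))
            - Real.exp (-y ^ 2 / 4)| ^ θ₁ * |y| ^ θ₂) ^ β)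
      (Set.Ioi (0:ℝ)) := by
  have hθ₂' : (-1:ℝ) < θ₂ := by linarith
  set I : ℝ → ℝ := fun σ => ∫ y : ℝ,
    |(σ + 1) ^ (-(1:ℝ)/2) * Real.exp (-y ^ 2 / (4 * (σ + 1)))
      - Real.exp (-y ^ 2 / 4)| ^ θ₁ * |y| ^ θ₂ with hI_def
  have hI_meas : StronglyMeasurable I := by
    apply MeasureTheory.StronglyMeasurable.integral_prod_right'
      (f := fun p : ℝ × ℝ => |(p.1 + 1) ^ (-(1:ℝ)/2) * Real.exp (-p.2 ^ 2 / (4 * (p.1 + 1)))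
        - Real.exp (-p.2 ^ 2 / 4)| ^ θ₁ * |p.2| ^ θ₂)
    apply Measurable.stronglyMeasurable
    fun_prop
  have hI_meas' : Measurable I := hI_meas.measurable
  have hI_nonneg : ∀ σ : ℝ, 0 ≤ I σ := fun σ =>
    integral_nonneg fun y => by positivity
  have hF_meas : Measurable fun σ : ℝ =>
      σ ^ (-2 + β * (θ₁ - θ₂ - 1) / 2) * I σ ^ β :=
    (measurable_id.pow measurable_const).mul (hI_meas'.pow measurable_const)
  rw [← Set.Ioc_union_Ioi_eq_Ioi (zero_le_one (α := ℝ))]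
  apply MeasureTheory.IntegrableOn.union
  · -- small σ
    set K₁ : ℝ := ∫ y : ℝ, Real.exp (-(θ₁/16 * y ^ 2)) * |y| ^ θ₂ with hK₁_def
    have hK₁ : 0 ≤ K₁ := integral_nonneg fun y => by positivity
    apply MeasureTheory.Integrable.mono'
      (g := fun σ : ℝ => (4:ℝ) ^ (θ₁ * β) * K₁ ^ β * σ ^ (-2 + β * (3 * θ₁ - θ₂ - 1) / 2))
    · apply Integrable.const_mul
      have h := intervalIntegral.intervalIntegrable_rpow'
        (a := 0) (b := 1) (r := -2 + β * (3 * θ₁ - θ₂ - 1) / 2) (by linarith)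
      rwa [intervalIntegrable_iff_integrableOn_Ioc_of_le zero_le_one] at h
    · exact (hF_meas.aestronglyMeasurable).restrict
    · rw [ae_restrict_iff' measurableSet_Ioc]
      apply ae_of_all
      rintro σ ⟨hσ0, hσ1⟩
      have hIb := I_small hθ₁ hθ₂ hσ0 hσ1
      rw [Real.norm_eq_abs, abs_of_nonneg (by positivity)]
      have step1 : I σ ^ β ≤ ((4 * σ) ^ θ₁ * K₁) ^ β :=
        Real.rpow_le_rpow (hI_nonneg σ) hIb hβ.le
      have step2 : ((4 * σ) ^ θ₁ * K₁) ^ β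
          = (4:ℝ) ^ (θ₁ * β) * K₁ ^ β * σ ^ (θ₁ * β) := by
        rw [Real.mul_rpow (Real.rpow_nonneg (by positivity) _) hK₁,
          ← Real.rpow_mul (by positivity),
          Real.mul_rpow (by norm_num) hσ0.le]
        ring
      calc σ ^ (-2 + β * (θ₁ - θ₂ - 1) / 2) * I σ ^ β
          ≤ σ ^ (-2 + β * (θ₁ - θ₂ - 1) / 2) * ((4:ℝ) ^ (θ₁ * β) * K₁ ^ β * σ ^ (θ₁ * β)) := by
            rw [← step2]
            exact mul_le_mul_of_nonneg_left step1 (Real.rpow_nonneg hσ0.le _)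
        _ = (4:ℝ) ^ (θ₁ * β) * K₁ ^ β * σ ^ (-2 + β * (3 * θ₁ - θ₂ - 1) / 2) := by
            rw [show (-2 + β * (3 * θ₁ - θ₂ - 1) / 2)
                = (-2 + β * (θ₁ - θ₂ - 1) / 2) + θ₁ * β from by ring,
              Real.rpow_add hσ0 (-2 + β * (θ₁ - θ₂ - 1) / 2) (θ₁ * β)]
            ring
  · -- large σ
    set K₂ : ℝ := ∫ u : ℝ, Real.exp (-(θ₁/4 * u ^ 2)) * |u| ^ θ₂ with hK₂_def
    have hK₂ : 0 ≤ K₂ := integral_nonneg fun u => by positivity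
    set κ : ℝ := (θ₂ + 1 - θ₁) / 2 with hκ_def
    set κp : ℝ := max κ 0 with hκp_def
    have hκp0 : 0 ≤ κp := le_max_right _ _
    have hp₂ : -2 + β * (θ₁ - θ₂ - 1) / 2 + κp * β < -1 := by
      rcases max_cases κ 0 with ⟨he, hc⟩ | ⟨he, hc⟩ <;> rw [hκp_def, he]
      · rw [hκ_def]; nlinarith
      · linarith
    set D : ℝ := ((2:ℝ) ^ (θ₁ + 1) * K₂) ^ β * 2 ^ (κp * β) with hD_def
    have hD : 0 ≤ D := by positivity
    apply MeasureTheory.Integrable.mono'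
      (g := fun σ : ℝ => D * σ ^ (-2 + β * (θ₁ - θ₂ - 1) / 2 + κp * β))
    · exact (integrableOn_Ioi_rpow_of_lt hp₂ zero_lt_one).const_mul _
    · exact (hF_meas.aestronglyMeasurable).restrict
    · rw [ae_restrict_iff' measurableSet_Ioi]
      apply ae_of_all
      intro σ hσ1
      rw [Set.mem_Ioi] at hσ1
      have hσ0 : (0:ℝ) < σ := by linarith
      have hIb := I_large hθ₁ hθ₂ (σ := σ) hσ0
      rw [Real.norm_eq_abs, abs_of_nonneg (by positivity)]
      -- (σ+1)^κ + 1 ≤ 2 * (2σ)^κp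
      have hA : (σ + 1) ^ κ ≤ (2 * σ) ^ κp := by
        rcases le_or_gt κ 0 with h | h
        · have ha1 : (σ + 1) ^ κ ≤ 1 :=
            Real.rpow_le_one_of_one_le_of_nonpos (by linarith) h
          have ha2 : (1:ℝ) ≤ (2 * σ) ^ κp :=
            Real.one_le_rpow (by linarith) hκp0
          linarith
        · rw [hκp_def, max_eq_left h.le]
          exact Real.rpow_le_rpow (by linarith) (by linarith) h.le
      have hB : (1:ℝ) ≤ (2 * σ) ^ κp := Real.one_le_rpow (by linarith) hκp0
      have hIb2 : I σ ≤ ((2:ℝ) ^ (θ₁ + 1) * K₂) * (2 * σ) ^ κp := by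
        refine hIb.trans ?_
        have : ((σ + 1) ^ κ + 1) * K₂ ≤ (2 * (2 * σ) ^ κp) * K₂ :=
          mul_le_mul_of_nonneg_right (by linarith) hK₂
        calc 2 ^ θ₁ * (((σ + 1) ^ κ + 1) * K₂)
            ≤ 2 ^ θ₁ * ((2 * (2 * σ) ^ κp) * K₂) :=
              mul_le_mul_of_nonneg_left this (Real.rpow_nonneg (by norm_num) _)
          _ = ((2:ℝ) ^ (θ₁ + 1) * K₂) * (2 * σ) ^ κp := by
              rw [Real.rpow_add (by norm_num : (0:ℝ) < 2), Real.rpow_one]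
              ring
      have step1 : I σ ^ β ≤ (((2:ℝ) ^ (θ₁ + 1) * K₂) * (2 * σ) ^ κp) ^ β :=
        Real.rpow_le_rpow (hI_nonneg σ) hIb2 hβ.le
      have step2 : (((2:ℝ) ^ (θ₁ + 1) * K₂) * (2 * σ) ^ κp) ^ β
          = D * σ ^ (κp * β) := by
        rw [Real.mul_rpow (by positivity) (Real.rpow_nonneg (by positivity) _),
          ← Real.rpow_mul (by positivity),
          Real.mul_rpow (by norm_num : (0:ℝ) ≤ 2) hσ0.le, hD_def]
        ring
      calc σ ^ (-2 + β * (θ₁ - θ₂ - 1) / 2) * I σ ^ β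
          ≤ σ ^ (-2 + β * (θ₁ - θ₂ - 1) / 2) * (D * σ ^ (κp * β)) := by
            rw [← step2]
            exact mul_le_mul_of_nonneg_left step1 (Real.rpow_nonneg hσ0.le _)
        _ = D * σ ^ (-2 + β * (θ₁ - θ₂ - 1) / 2 + κp * β) := by
            rw [Real.rpow_add hσ0 (-2 + β * (θ₁ - θ₂ - 1) / 2) (κp * β)]
            ring
end

section
/- Let p₁ > 4 and T > 0. Then there exists a constant C, depending only on p₁ and T, such that for all 0 < t₁ < t₂ ≤ T one has ∫₀^{t₁} ∫_ℝ |G_{t₂−s}(z) − G_{t₁−s}(z)| dz ds ≤ C (t₂ − t₁)^{1/2 + 1/p₁}. -/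
open MeasureTheory Real Filter

private lemma E_integrable (t : ℝ) (ht : 0 < t) :
    Integrable (fun x : ℝ => Real.exp (-x ^ 2 / (4 * t))) := by
  have h : ∀ x : ℝ, -x ^ 2 / (4 * t) = -(1/(4*t)) * x ^ 2 := by
    intro x; field_simp
  simp_rw [h]
  exact integrable_exp_neg_mul_sq (by positivity)

private lemma E_integral (t : ℝ) (ht : 0 < t) :
    ∫ x : ℝ, Real.exp (-x ^ 2 / (4 * t)) = Real.sqrt (4 * Real.pi * t) := by
  have h : ∀ x : ℝ, -x ^ 2 / (4 * t) = -(1/(4*t)) * x ^ 2 := by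
    intro x; field_simp
  simp_rw [h, integral_gaussian]
  congr 1
  field_simp

private lemma A_eq (t : ℝ) (ht : 0 < t) :
    (4 * Real.pi * t) ^ (-(1:ℝ)/2) = (Real.sqrt (4 * Real.pi * t))⁻¹ := by
  rw [Real.sqrt_eq_rpow, ← Real.rpow_neg (by positivity)]
  norm_num

private lemma G_integrable (t : ℝ) (ht : 0 < t) : Integrable (G t) := by
  unfold G
  exact (E_integrable t ht).const_mul _

private lemma G_integral (t : ℝ) (ht : 0 < t) : ∫ x : ℝ, G t x = 1 := by
  unfold G
  rw [integral_const_mul, E_integral t ht, A_eq t ht, inv_mul_cancel₀]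
  exact Real.sqrt_ne_zero'.mpr (by positivity)

private lemma inner_le_two (t t' : ℝ) (ht : 0 < t) (ht' : 0 < t') :
    ∫ z : ℝ, |G t' z - G t z| ≤ 2 := by
  have h1 : ∫ z : ℝ, |G t' z - G t z| ≤ ∫ z : ℝ, (G t' z + G t z) := by
    apply integral_mono ((G_integrable t' ht').sub (G_integrable t ht)).abs
      ((G_integrable t' ht').add (G_integrable t ht))
    intro z
    calc |G t' z - G t z| ≤ |G t' z| + |G t z| := abs_sub _ _
      _ = G t' z + G t z := by
          rw [abs_of_nonneg, abs_of_nonneg] <;> · unfold G; positivity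
  rw [integral_add (G_integrable t' ht') (G_integrable t ht), G_integral t ht,
    G_integral t' ht'] at h1
  linarith

private lemma inner_le_ratio (t t' : ℝ) (ht : 0 < t) (htt : t < t') :
    ∫ z : ℝ, |G t' z - G t z| ≤ (t' - t) / t := by
  have ht' : 0 < t' := ht.trans htt
  set a := Real.sqrt (4 * Real.pi * t) with ha
  set b := Real.sqrt (4 * Real.pi * t') with hb
  have ha0 : 0 < a := Real.sqrt_pos.mpr (by positivity)
  have hb0 : 0 < b := Real.sqrt_pos.mpr (by positivity)
  have hab : a ≤ b := Real.sqrt_le_sqrt (by nlinarith [Real.pi_pos])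
  set E : ℝ → ℝ → ℝ := fun u x => Real.exp (-x ^ 2 / (4 * u)) with hE
  have hEle : ∀ x, E t x ≤ E t' x := by
    intro x
    apply Real.exp_le_exp.mpr
    rw [neg_div, neg_div, neg_le_neg_iff]
    apply div_le_div_of_nonneg_left (by positivity) (by positivity) (by linarith)
  have hpt : ∀ x : ℝ, |G t' x - G t x| ≤
      (a⁻¹ - b⁻¹) * E t' x + a⁻¹ * (E t' x - E t x) := by
    intro x
    have hG : G t' x - G t x = (b⁻¹ - a⁻¹) * E t' x + a⁻¹ * (E t' x - E t x) := by
      unfold G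
      rw [A_eq t ht, A_eq t' ht']
      ring
    rw [hG]
    calc |(b⁻¹ - a⁻¹) * E t' x + a⁻¹ * (E t' x - E t x)|
        ≤ |(b⁻¹ - a⁻¹) * E t' x| + |a⁻¹ * (E t' x - E t x)| := abs_add_le _ _
      _ = (a⁻¹ - b⁻¹) * E t' x + a⁻¹ * (E t' x - E t x) := by
          rw [abs_mul, abs_mul, abs_of_nonpos (by simp [inv_anti₀ ha0 hab]),
            abs_of_nonneg (by unfold E; positivity),
            abs_of_nonneg (by positivity),
            abs_of_nonneg (sub_nonneg.mpr (hEle x))]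
          ring
  have hRHSint : Integrable (fun x : ℝ =>
      (a⁻¹ - b⁻¹) * E t' x + a⁻¹ * (E t' x - E t x)) :=
    (((E_integrable t' ht').const_mul _)).add
      (((E_integrable t' ht').sub (E_integrable t ht)).const_mul _)
  have h1 : ∫ x : ℝ, |G t' x - G t x| ≤
      ∫ x : ℝ, ((a⁻¹ - b⁻¹) * E t' x + a⁻¹ * (E t' x - E t x)) :=
    integral_mono ((G_integrable t' ht').sub (G_integrable t ht)).abs hRHSint hpt
  have h2 : ∫ x : ℝ, ((a⁻¹ - b⁻¹) * E t' x + a⁻¹ * (E t' x - E t x))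
      = (a⁻¹ - b⁻¹) * b + a⁻¹ * (b - a) := by
    have hi1 : Integrable (fun x : ℝ => (a⁻¹ - b⁻¹) * E t' x) :=
      (E_integrable t' ht').const_mul _
    have hisub : Integrable (fun x : ℝ => E t' x - E t x) :=
      (E_integrable t' ht').sub (E_integrable t ht)
    have hi2 : Integrable (fun x : ℝ => a⁻¹ * (E t' x - E t x)) :=
      hisub.const_mul _
    rw [integral_add hi1 hi2, integral_const_mul, integral_const_mul,
      integral_sub (E_integrable t' ht') (E_integrable t ht)]
    unfold E
    rw [E_integral t ht, E_integral t' ht', ← ha, ← hb]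
  rw [h2] at h1
  refine h1.trans ?_
  -- (a⁻¹ - b⁻¹) * b + a⁻¹ * (b - a) = 2*(b-a)/a ≤ (t'-t)/t
  have hsa : a ^ 2 = 4 * Real.pi * t := Real.sq_sqrt (by positivity)
  have hsb : b ^ 2 = 4 * Real.pi * t' := Real.sq_sqrt (by positivity)
  have hL : (a⁻¹ - b⁻¹) * b + a⁻¹ * (b - a) = (2 * b - 2 * a) / a := by
    field_simp
    ring
  have hR : (t' - t) / t = (b ^ 2 - a ^ 2) / a ^ 2 := by
    have hteq : t = a ^ 2 / (4 * Real.pi) := by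
      rw [hsa]; field_simp
    have ht'eq : t' = b ^ 2 / (4 * Real.pi) := by
      rw [hsb]; field_simp
    rw [hteq, ht'eq]
    have hπ : (4 * Real.pi) ≠ 0 := by positivity
    field_simp
  rw [hL, hR, div_le_div_iff₀ ha0 (by positivity)]
  nlinarith [mul_nonneg ha0.le (sq_nonneg (b - a))]

private lemma interp {I A B θ : ℝ} (hI0 : 0 ≤ I) (hA : I ≤ A) (hB : I ≤ B)
    (hθ0 : 0 ≤ θ) (hθ1 : θ ≤ 1) : I ≤ A ^ (1 - θ) * B ^ θ := by
  rcases eq_or_lt_of_le hI0 with h | h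
  · rw [← h]
    have hA0 : 0 ≤ A := le_trans hI0 hA
    have hB0 : 0 ≤ B := le_trans hI0 hB
    positivity
  · calc I = I ^ ((1 - θ) + θ) := by rw [sub_add_cancel, Real.rpow_one]
      _ = I ^ (1 - θ) * I ^ θ := Real.rpow_add h _ _
      _ ≤ A ^ (1 - θ) * B ^ θ := by
          apply mul_le_mul (Real.rpow_le_rpow hI0 hA (by linarith))
            (Real.rpow_le_rpow hI0 hB hθ0) (by positivity)
            (Real.rpow_nonneg (le_trans hI0 hA) _)

theorem heat_kernel_time_increment_L1
    (p₁ T : ℝ) (hp : 4 < p₁) (hT : 0 < T) :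
    ∃ C : ℝ, 0 < C ∧ ∀ t₁ t₂ : ℝ, 0 < t₁ → t₁ < t₂ → t₂ ≤ T →
      ∫ s in (0:ℝ)..t₁, ∫ z : ℝ, |G (t₂ - s) z - G (t₁ - s) z|
        ≤ C * (t₂ - t₁) ^ ((1:ℝ)/2 + 1/p₁) := by
  have hp0 : (0:ℝ) < p₁ := by linarith
  set θ : ℝ := 1/2 + 1/p₁ with hθdef
  have hθ0 : 0 < θ := by positivity
  have hθ1 : θ < 1 := by
    have h4 : 1/p₁ < 1/4 := by
      rw [div_lt_div_iff₀ hp0 (by norm_num)]; linarith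
    rw [hθdef]; linarith
  refine ⟨2 * T ^ (1 - θ) / (1 - θ), div_pos (by positivity) (by linarith), ?_⟩
  intro t₁ t₂ h1 h12 h2T
  set Δ := t₂ - t₁ with hΔdef
  have hΔ0 : 0 < Δ := sub_pos.mpr h12
  -- pointwise (in s) bound on the inner integral
  have key : ∀ s ∈ Set.Ioo (0:ℝ) t₁,
      ∫ z : ℝ, |G (t₂ - s) z - G (t₁ - s) z| ≤ (2 * Δ ^ θ) * (t₁ - s) ^ (-θ) := by
    intro s hs
    have hu : 0 < t₁ - s := sub_pos.mpr hs.2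
    have hu' : t₁ - s < t₂ - s := by linarith
    have hΔeq : (t₂ - s) - (t₁ - s) = Δ := by rw [hΔdef]; ring
    have hb2 : ∫ z : ℝ, |G (t₂ - s) z - G (t₁ - s) z| ≤ 2 :=
      inner_le_two _ _ hu (hu.trans hu')
    have hbr : ∫ z : ℝ, |G (t₂ - s) z - G (t₁ - s) z| ≤ Δ / (t₁ - s) := by
      have := inner_le_ratio (t₁ - s) (t₂ - s) hu hu'
      rwa [hΔeq] at this
    have hI0 : 0 ≤ ∫ z : ℝ, |G (t₂ - s) z - G (t₁ - s) z| :=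
      integral_nonneg fun z => abs_nonneg _
    have := interp hI0 hb2 hbr hθ0.le hθ1.le
    refine this.trans ?_
    rw [Real.div_rpow hΔ0.le hu.le, div_eq_mul_inv, ← Real.rpow_neg hu.le]
    have h2le : (2:ℝ) ^ (1 - θ) ≤ 2 := by
      nth_rewrite 2 [show (2:ℝ) = 2 ^ (1:ℝ) by rw [Real.rpow_one]]
      exact Real.rpow_le_rpow_of_exponent_le one_le_two (by linarith)
    have : (0:ℝ) ≤ Δ ^ θ * (t₁ - s) ^ (-θ) := by positivity
    calc (2:ℝ) ^ (1 - θ) * (Δ ^ θ * (t₁ - s) ^ (-θ))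
        ≤ 2 * (Δ ^ θ * (t₁ - s) ^ (-θ)) := mul_le_mul_of_nonneg_right h2le this
      _ = (2 * Δ ^ θ) * (t₁ - s) ^ (-θ) := by ring
  -- integrability of the majorant
  have hg_iint : IntervalIntegrable (fun s => (2 * Δ ^ θ) * (t₁ - s) ^ (-θ))
      volume 0 t₁ := by
    have h1' : IntervalIntegrable (fun x : ℝ => x ^ (-θ)) volume 0 t₁ :=
      intervalIntegral.intervalIntegrable_rpow' (by linarith)
    have h2' := (h1'.comp_sub_left t₁)
    simp only [sub_zero, sub_self] at h2'
    exact (h2'.symm).const_mul _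
  have hg_int : IntegrableOn (fun s => (2 * Δ ^ θ) * (t₁ - s) ^ (-θ))
      (Set.Ioo 0 t₁) volume := by
    exact hg_iint.1.mono_set Set.Ioo_subset_Ioc_self
  -- compare integrals
  rw [intervalIntegral.integral_of_le h1.le, integral_Ioc_eq_integral_Ioo]
  have hmono : ∫ s in Set.Ioo (0:ℝ) t₁, ∫ z : ℝ, |G (t₂ - s) z - G (t₁ - s) z|
      ≤ ∫ s in Set.Ioo (0:ℝ) t₁, (2 * Δ ^ θ) * (t₁ - s) ^ (-θ) :=
    integral_mono_of_nonneg
      (Eventually.of_forall fun s => integral_nonneg fun z => abs_nonneg _)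
      hg_int (ae_restrict_of_forall_mem measurableSet_Ioo key)
  refine hmono.trans ?_
  -- compute the majorant's integral
  have hval : ∫ s in Set.Ioo (0:ℝ) t₁, (2 * Δ ^ θ) * (t₁ - s) ^ (-θ)
      = (2 * Δ ^ θ) * (t₁ ^ (1 - θ) / (1 - θ)) := by
    rw [← integral_Ioc_eq_integral_Ioo, ← intervalIntegral.integral_of_le h1.le,
      intervalIntegral.integral_const_mul]
    congr 1
    rw [intervalIntegral.integral_comp_sub_left (fun x : ℝ => x ^ (-θ)) t₁]
    simp only [sub_zero, sub_self]
    rw [integral_rpow (Or.inl (by linarith))]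
    rw [Real.zero_rpow (by linarith), neg_add_eq_sub]
    ring_nf
  rw [hval]
  have hrpow : t₁ ^ (1 - θ) ≤ T ^ (1 - θ) :=
    Real.rpow_le_rpow h1.le (by linarith) (by linarith)
  have hΔθ : (0:ℝ) ≤ Δ ^ θ := Real.rpow_nonneg hΔ0.le _
  calc (2 * Δ ^ θ) * (t₁ ^ (1 - θ) / (1 - θ))
      ≤ (2 * Δ ^ θ) * (T ^ (1 - θ) / (1 - θ)) := by
        apply mul_le_mul_of_nonneg_left _ (by positivity)
        exact (div_le_div_iff_of_pos_right (by linarith)).mpr hrpow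
    _ = 2 * T ^ (1 - θ) / (1 - θ) * Δ ^ θ := by ring
end
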